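/- arXiv:2501.07673 — 2 statements merged into one kernel-verified Lean document; each statement's English description precedes it below -/
import Mathlib

section
/- Let X be an arithmetic L-space. Then there exists a clopen Scott upset U of X with max X ⊆ U if and only if there exists a clopen Scott upset U of X with Y_d ⊆ U; and if such a clopen Scott upset exists, then min Y_d (topologized so that its open sets are the traces of clopen upsets of X) is compact. -/
set_option linter.unusedSectionVars false


open Set Topology

variable {X : Type*} [TopologicalSpace X] [PartialOrder X]

/-- The downward closure `↓A` of a subset of a poset. -/
def dwC (A : Set X) : Set X := {x : X | ∃ a ∈ A, x ≤ a}

/-- The upward closure `↑A` of a subset of a poset. -/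
def upC (A : Set X) : Set X := {x : X | ∃ a ∈ A, a ≤ x}

/-- The set of maximal points of a subset of a poset. -/
def maxOf (A : Set X) : Set X := {x ∈ A | ∀ z ∈ A, x ≤ z → z = x}

/-- The set of minimal points of a subset of a poset. -/
def minOf (A : Set X) : Set X := {x ∈ A | ∀ z ∈ A, z ≤ x → z = x}

/-- A Priestley space: compact with the Priestley separation axiom. -/
def IsPriestley (X : Type*) [TopologicalSpace X] [PartialOrder X] : Prop :=
  CompactSpace X ∧
    ∀ x y : X, ¬x ≤ y → ∃ U : Set X, IsClopen U ∧ IsUpperSet U ∧ x ∈ U ∧ y ∉ U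

/-- An L-space: a Priestley space where the closure of every open upset is an open upset. -/
def IsLSpace (X : Type*) [TopologicalSpace X] [PartialOrder X] : Prop :=
  IsPriestley X ∧
    ∀ U : Set X, IsOpen U → IsUpperSet U → IsOpen (closure U) ∧ IsUpperSet (closure U)

/-- The set `Y` of localic points: those `y` with `↓y` clopen. -/
def localicPts (X : Type*) [TopologicalSpace X] [PartialOrder X] : Set X :=
  {y : X | IsClopen (dwC ({y} : Set X))}

/-- A Scott upset: a closed upset whose minimal points are localic. -/
def IsScottUp (F : Set X) : Prop :=
  IsClosed F ∧ IsUpperSet F ∧ minOf F ⊆ localicPts X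

/-- The collection of clopen Scott upsets of `X`. -/
def ClopSUp (X : Type*) [TopologicalSpace X] [PartialOrder X] : Set (Set X) :=
  {U : Set X | IsClopen U ∧ IsScottUp U}

/-- The core of a clopen upset: the union of the clopen Scott upsets inside it. -/
def coreC (U : Set X) : Set X := ⋃₀ {V : Set X | V ∈ ClopSUp X ∧ V ⊆ U}

/-- An algebraic L-space: the core of each clopen upset is dense in it. -/
def IsAlgebraicLSpace (X : Type*) [TopologicalSpace X] [PartialOrder X] : Prop :=
  IsLSpace X ∧ ∀ U : Set X, IsClopen U → IsUpperSet U → U ⊆ closure (coreC U)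

/-- An arithmetic L-space: an algebraic L-space in which the intersection of any
two clopen Scott upsets is again a Scott upset. -/
def IsArithmeticLSpace (X : Type*) [TopologicalSpace X] [PartialOrder X] : Prop :=
  IsAlgebraicLSpace X ∧
    ∀ U V : Set X, U ∈ ClopSUp X → V ∈ ClopSUp X → IsScottUp (U ∩ V)

/-- A nuclear subset of an L-space. -/
def IsNuclearSub (N : Set X) : Prop :=
  IsClosed N ∧ ∀ U : Set X, IsClopen U → IsClopen (dwC (U ∩ N))

/-- The nucleus `j_N` associated to a nuclear subset: `j_N U = X \ ↓(N \ U)`. -/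
def jN (N U : Set X) : Set X := (dwC (N \ U))ᶜ

/-- A nuclear subset is inductive if `↑(F ∩ N)` is a Scott upset for every Scott upset `F`. -/
def IsInductiveNuclear (N : Set X) : Prop :=
  ∀ F : Set X, IsScottUp F → IsScottUp (upC (F ∩ N))

/-- The pseudocomplement `V* = X \ ↓V`. -/
def starC (V : Set X) : Set X := (dwC V)ᶜ

/-- The `d`-nucleus on clopen upsets: `d U = cl ⋃ {V** : V ∈ ClopSUp X, V ⊆ U}`. -/
def dOp (U : Set X) : Set X :=
  closure (⋃₀ {W : Set X | ∃ V ∈ ClopSUp X, V ⊆ U ∧ W = starC (starC V)})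

/-- The `d`-core: `core_d U = ⋃ {d V : V ∈ ClopSUp X, V ⊆ U}`. -/
def coreD (U : Set X) : Set X :=
  ⋃₀ {W : Set X | ∃ V ∈ ClopSUp X, V ⊆ U ∧ W = dOp V}

/-- The topology on a subset `S ⊆ X` whose opens are (generated by) the traces of
clopen upsets of `X`. -/
def traceTop (S : Set X) : TopologicalSpace S :=
  TopologicalSpace.generateFrom
    {V : Set S | ∃ U : Set X, IsClopen U ∧ IsUpperSet U ∧ V = Subtype.val ⁻¹' U}


/-! ### Auxiliary development -/

section St18Aux

private lemma mem_dwC_singleton {a x : X} : x ∈ dwC ({a} : Set X) ↔ x ≤ a := by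
  constructor
  · rintro ⟨b, hb, h⟩
    rwa [Set.mem_singleton_iff.mp hb] at h
  · intro h
    exact ⟨a, rfl, h⟩

private lemma mem_upC_singleton {a x : X} : x ∈ upC ({a} : Set X) ↔ a ≤ x := by
  constructor
  · rintro ⟨b, hb, h⟩
    rwa [Set.mem_singleton_iff.mp hb] at h
  · intro h
    exact ⟨a, rfl, h⟩

private lemma dwC_mono {A B : Set X} (h : A ⊆ B) : dwC A ⊆ dwC B :=
  fun _x ⟨a, ha, hxa⟩ => ⟨a, h ha, hxa⟩

private lemma subset_dwC {A : Set X} : A ⊆ dwC A := fun x hx => ⟨x, hx, le_rfl⟩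

private lemma dwC_lower {A : Set X} {a b : X} (ha : a ∈ dwC A) (hba : b ≤ a) : b ∈ dwC A := by
  obtain ⟨c, hc, hac⟩ := ha
  exact ⟨c, hc, hba.trans hac⟩

private lemma dwC_empty : dwC (∅ : Set X) = ∅ := by
  ext x
  exact ⟨fun ⟨a, ha, _⟩ => ha.elim, fun h => h.elim⟩

private lemma dwC_univ : dwC (univ : Set X) = univ :=
  eq_univ_of_forall fun x => ⟨x, trivial, le_rfl⟩

private lemma isUpperSet_starC (A : Set X) : IsUpperSet (starC A) :=
  fun _a _b hab ha hb => ha (dwC_lower hb hab)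

private lemma starC_anti {A B : Set X} (h : A ⊆ B) : starC B ⊆ starC A :=
  compl_subset_compl.mpr (dwC_mono h)

private lemma star2_mono {A B : Set X} (h : A ⊆ B) :
    starC (starC A) ⊆ starC (starC B) :=
  starC_anti (starC_anti h)

private lemma star2_empty : starC (starC (∅ : Set X)) = ∅ := by
  unfold starC
  rw [dwC_empty, compl_empty, dwC_univ, compl_univ]

private lemma subset_star2 {A : Set X} (hA : IsUpperSet A) : A ⊆ starC (starC A) := by
  intro x hx
  rintro ⟨a, ha, hxa⟩
  exact ha ⟨a, hA hxa hx, le_rfl⟩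

private lemma star2_subset_dOp {V U : Set X} (hV : V ∈ ClopSUp X) (hVU : V ⊆ U) :
    starC (starC V) ⊆ dOp U := by
  have hmem : starC (starC V) ∈
      {W : Set X | ∃ V' ∈ ClopSUp X, V' ⊆ U ∧ W = starC (starC V')} :=
    ⟨V, hV, hVU, rfl⟩
  exact (subset_sUnion_of_mem hmem).trans subset_closure

private lemma empty_mem_ClopSUp : (∅ : Set X) ∈ ClopSUp X :=
  ⟨isClopen_empty, isClosed_empty, isUpperSet_empty, fun _x hx => hx.1.elim⟩

private lemma union_mem_ClopSUp {V W : Set X} (hV : V ∈ ClopSUp X) (hW : W ∈ ClopSUp X) :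
    V ∪ W ∈ ClopSUp X := by
  refine ⟨hV.1.union hW.1, hV.2.1.union hW.2.1, hV.2.2.1.union hW.2.2.1, ?_⟩
  intro x hx
  rcases hx.1 with hxV | hxW
  · exact hV.2.2.2 ⟨hxV, fun z hz hzx => hx.2 z (Or.inl hz) hzx⟩
  · exact hW.2.2.2 ⟨hxW, fun z hz hzx => hx.2 z (Or.inr hz) hzx⟩

private lemma isUpperSet_upC (A : Set X) : IsUpperSet (upC A) :=
  fun _a _b hab ⟨c, hc, hca⟩ => ⟨c, hc, hca.trans hab⟩

private lemma pr_isClosed_dwC_single (hP : IsPriestley X) (a : X) :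
    IsClosed (dwC ({a} : Set X)) := by
  rw [← isOpen_compl_iff, isOpen_iff_forall_mem_open]
  intro w hw
  have hwa : ¬ w ≤ a := fun h => hw (mem_dwC_singleton.mpr h)
  obtain ⟨U, hU, hUp, hwU, haU⟩ := hP.2 w a hwa
  refine ⟨U, ?_, hU.2, hwU⟩
  intro y hy
  intro hymem
  exact haU (hUp (mem_dwC_singleton.mp hymem) hy)

private lemma pr_isClosed_upC (hP : IsPriestley X) {K : Set X} (hK : IsCompact K) :
    IsClosed (upC K) := by
  classical
  haveI := hP.1
  rw [← isOpen_compl_iff, isOpen_iff_forall_mem_open]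
  intro w hw
  have h : ∀ a : ↥K, ∃ U : Set X, IsClopen U ∧ IsUpperSet U ∧ (a : X) ∈ U ∧ w ∉ U := by
    rintro ⟨a, ha⟩
    exact hP.2 a w fun hle => hw ⟨a, ha, hle⟩
  choose u h1 h2 h3 h4 using h
  obtain ⟨t, ht⟩ := hK.elim_finite_subcover u (fun a => (h1 a).2)
    (fun x hx => mem_iUnion.mpr ⟨⟨x, hx⟩, h3 _⟩)
  refine ⟨(⋃ a ∈ t, u a)ᶜ, ?_, (isClopen_biUnion_finset fun a _ => h1 a).compl.2, ?_⟩
  · intro y hy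
    rintro ⟨a, haK, hay⟩
    obtain ⟨i, hit, hai⟩ := mem_iUnion₂.mp (ht haK)
    exact hy (mem_iUnion₂.mpr ⟨i, hit, h2 i hay hai⟩)
  · intro hwmem
    obtain ⟨a, -, hwa⟩ := mem_iUnion₂.mp hwmem
    exact h4 a hwa

private lemma pr_sep_upset (hP : IsPriestley X) {F : Set X} (hFc : IsClosed F)
    (hFu : IsUpperSet F) {z : X} (hz : z ∉ F) :
    ∃ U, IsClopen U ∧ IsUpperSet U ∧ F ⊆ U ∧ z ∉ U := by
  classical
  haveI := hP.1
  have h : ∀ a : ↥F, ∃ U : Set X, IsClopen U ∧ IsUpperSet U ∧ (a : X) ∈ U ∧ z ∉ U := by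
    rintro ⟨a, ha⟩
    exact hP.2 a z fun hle => hz (hFu hle ha)
  choose u h1 h2 h3 h4 using h
  obtain ⟨t, ht⟩ := hFc.isCompact.elim_finite_subcover u (fun a => (h1 a).2)
    (fun x hx => mem_iUnion.mpr ⟨⟨x, hx⟩, h3 _⟩)
  refine ⟨⋃ a ∈ t, u a, isClopen_biUnion_finset fun a _ => h1 a,
    isUpperSet_iUnion₂ fun a _ => h2 a, ht, ?_⟩
  intro hzmem
  obtain ⟨a, -, hza⟩ := mem_iUnion₂.mp hzmem
  exact h4 a hza

private lemma pr_le_of_forall (hP : IsPriestley X) {x y : X}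
    (h : ∀ U : Set X, IsClopen U → IsUpperSet U → x ∈ U → y ∈ U) : x ≤ y := by
  by_contra hxy
  obtain ⟨U, hU, hUp, hxU, hyU⟩ := hP.2 x y hxy
  exact hyU (h U hU hUp hxU)

private lemma pr_exists_max (hP : IsPriestley X) (x : X) :
    ∃ m, x ≤ m ∧ m ∈ maxOf (univ : Set X) := by
  haveI := hP.1
  have hchains : ∀ c ⊆ {z : X | x ≤ z}, IsChain (· ≤ ·) c → ∀ y ∈ c,
      ∃ ub ∈ {z : X | x ≤ z}, ∀ z ∈ c, z ≤ ub := by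
    intro c hcs hchain y hy
    haveI : Nonempty ↥c := ⟨⟨y, hy⟩⟩
    have hne := IsCompact.nonempty_iInter_of_directed_nonempty_isCompact_isClosed
      (fun a : ↥c => upC ({(a : X)} : Set X)) ?_ ?_ ?_ ?_
    · obtain ⟨q, hq⟩ := hne
      simp only [mem_iInter] at hq
      have hq' : ∀ a : ↥c, (a : X) ≤ q := fun a => mem_upC_singleton.mp (hq a)
      exact ⟨q, (hcs hy).trans (hq' ⟨y, hy⟩), fun z hz => hq' ⟨z, hz⟩⟩
    · intro a b
      rcases hchain.total a.2 b.2 with h | h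
      · exact ⟨b, fun z hz => mem_upC_singleton.mpr (h.trans (mem_upC_singleton.mp hz)),
          le_refl _⟩
      · exact ⟨a, le_refl _,
          fun z hz => mem_upC_singleton.mpr (h.trans (mem_upC_singleton.mp hz))⟩
    · exact fun a => ⟨a, mem_upC_singleton.mpr le_rfl⟩
    · exact fun a => (pr_isClosed_upC hP isCompact_singleton).isCompact
    · exact fun a => pr_isClosed_upC hP isCompact_singleton
  obtain ⟨m, hxm, hm⟩ := zorn_le_nonempty₀ {z : X | x ≤ z} hchains x le_rfl
  refine ⟨m, hxm, trivial, ?_⟩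
  intro z _ hmz
  exact le_antisymm (hm.2 (hxm.trans hmz) hmz) hmz

private lemma pr_exists_min (hP : IsPriestley X) {F : Set X} (hFc : IsClosed F)
    {x : X} (hx : x ∈ F) : ∃ q, q ∈ minOf F ∧ q ≤ x := by
  haveI := hP.1
  have hchains : ∀ c ⊆ {z : Xᵒᵈ | OrderDual.ofDual z ∈ F}, IsChain (· ≤ ·) c → ∀ y ∈ c,
      ∃ ub ∈ {z : Xᵒᵈ | OrderDual.ofDual z ∈ F}, ∀ z ∈ c, z ≤ ub := by
    intro c hcs hchain y hy
    haveI : Nonempty ↥c := ⟨⟨y, hy⟩⟩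
    have hne := IsCompact.nonempty_iInter_of_directed_nonempty_isCompact_isClosed
      (fun a : ↥c => dwC ({OrderDual.ofDual (a : Xᵒᵈ)} : Set X) ∩ F) ?_ ?_ ?_ ?_
    · obtain ⟨q, hq⟩ := hne
      simp only [mem_iInter] at hq
      have hq' : ∀ a : ↥c, q ≤ OrderDual.ofDual (a : Xᵒᵈ) :=
        fun a => mem_dwC_singleton.mp (hq a).1
      refine ⟨OrderDual.toDual q, (hq ⟨y, hy⟩).2, fun z hz => hq' ⟨z, hz⟩⟩
    · intro a b
      rcases hchain.total a.2 b.2 with h | h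
      · refine ⟨b, fun z hz => ⟨mem_dwC_singleton.mpr ((mem_dwC_singleton.mp hz.1).trans h),
          hz.2⟩, le_refl _⟩
      · refine ⟨a, le_refl _, fun z hz =>
          ⟨mem_dwC_singleton.mpr ((mem_dwC_singleton.mp hz.1).trans h), hz.2⟩⟩
    · exact fun a => ⟨OrderDual.ofDual (a : Xᵒᵈ), mem_dwC_singleton.mpr le_rfl, hcs a.2⟩
    · exact fun a => ((pr_isClosed_dwC_single hP _).inter hFc).isCompact
    · exact fun a => (pr_isClosed_dwC_single hP _).inter hFc
  obtain ⟨m, hxm, hm⟩ := zorn_le_nonempty₀ (α := Xᵒᵈ)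
    {z : Xᵒᵈ | OrderDual.ofDual z ∈ F} hchains (OrderDual.toDual x) hx
  refine ⟨OrderDual.ofDual m, ⟨hm.1, ?_⟩, hxm⟩
  intro z hz hzm
  have h2 : m ≤ OrderDual.toDual z := hzm
  have h3 : OrderDual.ofDual m ≤ z := hm.2 hz h2
  exact le_antisymm hzm h3

private lemma scott_compact (hP : IsPriestley X) {V : Set X} (hV : V ∈ ClopSUp X)
    {S : Set (Set X)} (hSne : S.Nonempty)
    (hSdir : ∀ A ∈ S, ∀ B ∈ S, ∃ C ∈ S, A ⊆ C ∧ B ⊆ C)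
    (hSop : ∀ A ∈ S, IsOpen A) (hSup : ∀ A ∈ S, IsUpperSet A)
    (hVS : V ⊆ closure (⋃₀ S)) : ∃ C ∈ S, V ⊆ C := by
  classical
  haveI := hP.1
  have hVsub : V ⊆ ⋃₀ S := by
    intro x hxV
    obtain ⟨q, hqmin, hqx⟩ := pr_exists_min hP hV.2.1 hxV
    have hqY : IsClopen (dwC ({q} : Set X)) := hV.2.2.2 hqmin
    have hqcl : q ∈ closure (⋃₀ S) := hVS hqmin.1
    obtain ⟨w, hw⟩ := mem_closure_iff.mp hqcl (dwC {q}) hqY.2 (mem_dwC_singleton.mpr le_rfl)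
    obtain ⟨A, hAS, hwA⟩ := hw.2
    have hqA : q ∈ A := hSup A hAS (mem_dwC_singleton.mp hw.1) hwA
    exact ⟨A, hAS, hSup A hAS hqx hqA⟩
  have hcov : V ⊆ ⋃ A : ↥S, (A : Set X) := by
    intro x hx
    obtain ⟨A, hAS, hxA⟩ := hVsub hx
    exact mem_iUnion.mpr ⟨⟨A, hAS⟩, hxA⟩
  obtain ⟨t, ht⟩ := hV.1.1.isCompact.elim_finite_subcover (fun A : ↥S => (A : Set X))
    (fun A => hSop A A.2) hcov
  have hboundAll : ∀ s : Finset ↥S, ∃ C ∈ S, ∀ A ∈ s, (A : Set X) ⊆ C := by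
    classical
    intro s
    induction s using Finset.induction_on with
    | empty =>
      obtain ⟨c0, hc0⟩ := hSne
      exact ⟨c0, hc0, fun A hA => absurd hA (Finset.notMem_empty A)⟩
    | @insert a s _ ih =>
      obtain ⟨C, hC, hCb⟩ := ih
      obtain ⟨D, hD, hAD, hCD⟩ := hSdir a a.2 C hC
      refine ⟨D, hD, fun B hB => ?_⟩
      rcases Finset.mem_insert.mp hB with rfl | hB
      · exact hAD
      · exact (hCb B hB).trans hCD
  obtain ⟨C, hCS, hC⟩ := hboundAll t
  refine ⟨C, hCS, fun x hx => ?_⟩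
  obtain ⟨A, hAt, hxA⟩ := mem_iUnion₂.mp (ht hx)
  exact hC A hAt hxA

end St18Aux

/-! ### The context of Statement 18 -/

private structure St18Ctx (X : Type*) [TopologicalSpace X] [PartialOrder X]
    (N : Set X) : Prop where
  hP : IsPriestley X
  hLcl : ∀ U : Set X, IsOpen U → IsUpperSet U → IsOpen (closure U) ∧ IsUpperSet (closure U)
  hNcl : IsClosed N
  hNnuc : ∀ U : Set X, IsClopen U → IsClopen (dwC (U ∩ N))
  hNd : ∀ U : Set X, IsClopen U → IsUpperSet U → jN N U = dOp U

section St18Main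

variable {N : Set X}

private lemma L_dempty : dOp (∅ : Set X) = ∅ := by
  have h : ⋃₀ {W : Set X | ∃ V ∈ ClopSUp X, V ⊆ (∅ : Set X) ∧ W = starC (starC V)}
      = (∅ : Set X) := by
    apply subset_empty_iff.mp
    rintro x ⟨W, ⟨V, _hV, hVsub, rfl⟩, hxW⟩
    rw [subset_empty_iff.mp hVsub, star2_empty] at hxW
    exact hxW
  show closure _ = _
  rw [h, closure_empty]

private lemma L_dwCN (hc : St18Ctx X N) : dwC N = univ := by
  have h := hc.hNd ∅ isClopen_empty isUpperSet_empty
  rw [L_dempty] at h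
  unfold jN at h
  rw [diff_empty] at h
  exact compl_empty_iff.mp h

private lemma L_duniv (hc : St18Ctx X N) : dOp (univ : Set X) = univ := by
  have h := hc.hNd univ isClopen_univ isUpperSet_univ
  rw [← h]
  unfold jN
  rw [diff_univ, dwC_empty, compl_empty]

private lemma L_dmem (hc : St18Ctx X N) {U : Set X} (hU : IsClopen U) (hUp : IsUpperSet U)
    {x : X} : x ∈ dOp U ↔ ∀ n ∈ N, x ≤ n → n ∈ U := by
  rw [← hc.hNd U hU hUp]
  unfold jN
  rw [mem_compl_iff]
  constructor
  · intro hx n hnN hxn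
    by_contra hnU
    exact hx ⟨n, ⟨hnN, hnU⟩, hxn⟩
  · rintro h ⟨n, hn, hxn⟩
    exact hn.2 (h n hn.1 hxn)

private lemma L_dclopen (hc : St18Ctx X N) {U : Set X} (hU : IsClopen U)
    (hUp : IsUpperSet U) : IsClopen (dOp U) := by
  rw [← hc.hNd U hU hUp]
  unfold jN
  rw [diff_eq_compl_inter]
  exact (hc.hNnuc Uᶜ hU.compl).compl

private lemma L_dupper (hc : St18Ctx X N) {U : Set X} (hU : IsClopen U)
    (hUp : IsUpperSet U) : IsUpperSet (dOp U) := by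
  rw [← hc.hNd U hU hUp]
  intro a b hab ha hb
  exact ha (dwC_lower hb hab)

private lemma L_subset_d (hc : St18Ctx X N) {U : Set X} (hU : IsClopen U)
    (hUp : IsUpperSet U) : U ⊆ dOp U := by
  intro x hx
  exact (L_dmem hc hU hUp).mpr fun n _ hxn => hUp hxn hx

private lemma L_dtrans (hc : St18Ctx X N) {U : Set X} (hU : IsClopen U)
    (hUp : IsUpperSet U) {n : X} (hn : n ∈ N) (h : n ∈ dOp U) : n ∈ U :=
  (L_dmem hc hU hUp).mp h n hn le_rfl

private lemma L_dmono (hc : St18Ctx X N) {U U' : Set X} (hU : IsClopen U)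
    (hUp : IsUpperSet U) (hU' : IsClopen U') (hU'p : IsUpperSet U') (h : U ⊆ U') :
    dOp U ⊆ dOp U' := by
  intro x hx
  exact (L_dmem hc hU' hU'p).mpr fun n hn hxn => h ((L_dmem hc hU hUp).mp hx n hn hxn)

private lemma L_didem (hc : St18Ctx X N) {U : Set X} (hU : IsClopen U)
    (hUp : IsUpperSet U) : dOp (dOp U) = dOp U := by
  apply Subset.antisymm
  · intro x hx
    refine (L_dmem hc hU hUp).mpr fun n hn hxn => ?_
    exact L_dtrans hc hU hUp hn
      ((L_dmem hc (L_dclopen hc hU hUp) (L_dupper hc hU hUp)).mp hx n hn hxn)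
  · exact L_subset_d hc (L_dclopen hc hU hUp) (L_dupper hc hU hUp)

private lemma L_dinter (hc : St18Ctx X N) {U U' : Set X} (hU : IsClopen U)
    (hUp : IsUpperSet U) (hU' : IsClopen U') (hU'p : IsUpperSet U') :
    dOp (U ∩ U') = dOp U ∩ dOp U' := by
  ext x
  rw [L_dmem hc (hU.inter hU') (hUp.inter hU'p), mem_inter_iff,
      L_dmem hc hU hUp, L_dmem hc hU' hU'p]
  constructor
  · intro h
    exact ⟨fun n hn hxn => (h n hn hxn).1, fun n hn hxn => (h n hn hxn).2⟩
  · intro h n hn hxn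
    exact ⟨h.1 n hn hxn, h.2 n hn hxn⟩

private lemma L_dcongr (hc : St18Ctx X N) {A B : Set X} (hA : IsClopen A)
    (hAp : IsUpperSet A) (hB : IsClopen B) (hBp : IsUpperSet B)
    (h : ∀ n ∈ N, (n ∈ A ↔ n ∈ B)) : dOp A = dOp B := by
  ext x
  rw [L_dmem hc hA hAp, L_dmem hc hB hBp]
  constructor
  · intro hx n hn hxn
    exact (h n hn).mp (hx n hn hxn)
  · intro hx n hn hxn
    exact (h n hn).mpr (hx n hn hxn)

private lemma L_trace (hc : St18Ctx X N) {U M : Set X} (hU : IsClopen U)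
    (hUp : IsUpperSet U) (hM : IsClopen M) (hMp : IsUpperSet M) (hMd : dOp M = M) :
    dOp U ⊆ M ↔ N ∩ U ⊆ M := by
  constructor
  · rintro h n ⟨hnN, hnU⟩
    exact h (L_subset_d hc hU hUp hnU)
  · intro h x hx
    rw [← hMd]
    refine (L_dmem hc hM hMp).mpr fun n hn hxn => ?_
    exact h ⟨hn, (L_dmem hc hU hUp).mp hx n hn hxn⟩

private lemma L_maxN (hc : St18Ctx X N) : maxOf (univ : Set X) ⊆ N := by
  intro m hm
  have : m ∈ dwC N := by rw [L_dwCN hc]; trivial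
  obtain ⟨n, hnN, hmn⟩ := this
  rwa [hm.2 n trivial hmn] at hnN

private lemma L_dwC_clopen (hc : St18Ctx X N) {W : Set X} (hW : IsClopen W)
    (hWp : IsUpperSet W) : IsClopen (dwC W) := by
  have h : dwC W = dwC (W ∩ N) := by
    apply Subset.antisymm
    · rintro x ⟨a, haW, hxa⟩
      have : a ∈ dwC N := by rw [L_dwCN hc]; trivial
      obtain ⟨n, hnN, han⟩ := this
      exact ⟨n, ⟨hWp han haW, hnN⟩, hxa.trans han⟩
    · exact dwC_mono inter_subset_left
  rw [h]
  exact hc.hNnuc W hW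

private lemma L_star2_clopen (hc : St18Ctx X N) {W : Set X} (hW : IsClopen W)
    (hWp : IsUpperSet W) : IsClopen (starC (starC W)) := by
  have h1 : IsClopen (starC W) := (L_dwC_clopen hc hW hWp).compl
  exact (L_dwC_clopen hc h1 (isUpperSet_starC W)).compl

private lemma clos_clopen (hc : St18Ctx X N) {S : Set (Set X)}
    (h : ∀ A ∈ S, IsOpen A ∧ IsUpperSet A) :
    IsClopen (closure (⋃₀ S)) ∧ IsUpperSet (closure (⋃₀ S)) := by
  have hopen := isOpen_sUnion (fun t ht => (h t ht).1)
  have hup := isUpperSet_sUnion (fun t ht => (h t ht).2)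
  obtain ⟨h1, h2⟩ := hc.hLcl _ hopen hup
  exact ⟨⟨isClosed_closure, h1⟩, h2⟩

private lemma L_joinid (hc : St18Ctx X N) {S : Set (Set X)}
    (hmem : ∀ A ∈ S, IsClopen A ∧ IsUpperSet A) :
    dOp (closure (⋃₀ (dOp '' S))) = dOp (closure (⋃₀ S)) := by
  have hA := clos_clopen hc (fun A hAS => ⟨(hmem A hAS).1.2, (hmem A hAS).2⟩)
  have hB := clos_clopen (S := dOp '' S) hc ?_
  · have h1 : closure (⋃₀ S) ⊆ closure (⋃₀ (dOp '' S)) := by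
      apply closure_mono
      rintro x ⟨A, hAS, hxA⟩
      exact ⟨dOp A, ⟨A, hAS, rfl⟩, L_subset_d hc (hmem A hAS).1 (hmem A hAS).2 hxA⟩
    have h2 : closure (⋃₀ (dOp '' S)) ⊆ dOp (closure (⋃₀ S)) := by
      apply closure_minimal ?_ (L_dclopen hc hA.1 hA.2).1
      rintro x ⟨B, ⟨A, hAS, rfl⟩, hxB⟩
      exact L_dmono hc (hmem A hAS).1 (hmem A hAS).2 hA.1 hA.2
        ((subset_sUnion_of_mem hAS).trans subset_closure) hxB
    apply Subset.antisymm
    · have h3 := L_dmono hc hB.1 hB.2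
        (L_dclopen hc hA.1 hA.2) (L_dupper hc hA.1 hA.2) h2
      rwa [L_didem hc hA.1 hA.2] at h3
    · exact L_dmono hc hA.1 hA.2 hB.1 hB.2 h1
  · rintro B ⟨A, hAS, rfl⟩
    exact ⟨(L_dclopen hc (hmem A hAS).1 (hmem A hAS).2).2,
      L_dupper hc (hmem A hAS).1 (hmem A hAS).2⟩

private lemma L_dLcpt (hc : St18Ctx X N) {V₀ : Set X} (hV₀ : V₀ ∈ ClopSUp X)
    {S : Set (Set X)} (hSne : S.Nonempty)
    (hSdir : ∀ A ∈ S, ∀ B ∈ S, ∃ C ∈ S, A ⊆ C ∧ B ⊆ C)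
    (hSmem : ∀ c ∈ S, IsClopen c ∧ IsUpperSet c ∧ dOp c = c)
    (h : dOp V₀ ⊆ dOp (closure (⋃₀ S))) : ∃ c ∈ S, dOp V₀ ⊆ c := by
  have hCc := clos_clopen hc (fun A hAS => ⟨(hSmem A hAS).1.2, (hSmem A hAS).2.1⟩)
  set C := closure (⋃₀ S) with hC
  have h2 : V₀ ⊆ dOp C := (L_subset_d hc hV₀.1 hV₀.2.2.1).trans h
  have h3 : V₀ ⊆ closure
      (⋃₀ {W : Set X | ∃ V ∈ ClopSUp X, V ⊆ C ∧ W = starC (starC V)}) := h2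
  have hfam_ne : {W : Set X | ∃ V ∈ ClopSUp X, V ⊆ C ∧ W = starC (starC V)}.Nonempty :=
    ⟨starC (starC (∅ : Set X)), ∅, empty_mem_ClopSUp, empty_subset _, rfl⟩
  have hfam_dir : ∀ A ∈ {W : Set X | ∃ V ∈ ClopSUp X, V ⊆ C ∧ W = starC (starC V)},
      ∀ B ∈ {W : Set X | ∃ V ∈ ClopSUp X, V ⊆ C ∧ W = starC (starC V)},
      ∃ D ∈ {W : Set X | ∃ V ∈ ClopSUp X, V ⊆ C ∧ W = starC (starC V)},
        A ⊆ D ∧ B ⊆ D := by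
    rintro A ⟨V1, hV1, h1C, rfl⟩ B ⟨V2, hV2, h2C, rfl⟩
    exact ⟨starC (starC (V1 ∪ V2)),
      ⟨V1 ∪ V2, union_mem_ClopSUp hV1 hV2, union_subset h1C h2C, rfl⟩,
      star2_mono subset_union_left, star2_mono subset_union_right⟩
  have hfam_op : ∀ A ∈ {W : Set X | ∃ V ∈ ClopSUp X, V ⊆ C ∧ W = starC (starC V)},
      IsOpen A := by
    rintro A ⟨V1, hV1, h1C, rfl⟩
    exact (L_star2_clopen hc hV1.1 hV1.2.2.1).2
  have hfam_up : ∀ A ∈ {W : Set X | ∃ V ∈ ClopSUp X, V ⊆ C ∧ W = starC (starC V)},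
      IsUpperSet A := by
    rintro A ⟨V1, _hV1, _h1C, rfl⟩
    exact isUpperSet_starC _
  obtain ⟨W₃, hW₃mem, hVW⟩ :=
    scott_compact hc.hP hV₀ hfam_ne hfam_dir hfam_op hfam_up h3
  obtain ⟨V₃, hV₃, hV₃C, rfl⟩ := hW₃mem
  have hNV₀ : N ∩ V₀ ⊆ V₃ := by
    rintro n ⟨hnN, hnV₀⟩
    exact L_dtrans hc hV₃.1 hV₃.2.2.1 hnN (star2_subset_dOp hV₃ subset_rfl (hVW hnV₀))
  obtain ⟨c₀, hc₀S, hV₃c₀⟩ := scott_compact hc.hP hV₃ hSne hSdir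
    (fun A hAS => (hSmem A hAS).1.2) (fun A hAS => (hSmem A hAS).2.1) hV₃C
  refine ⟨c₀, hc₀S, ?_⟩
  exact (L_trace hc hV₀.1 hV₀.2.2.1 (hSmem c₀ hc₀S).1 (hSmem c₀ hc₀S).2.1
    (hSmem c₀ hc₀S).2.2).mpr (hNV₀.trans hV₃c₀)

private lemma L_zorn (hc : St18Ctx X N) {V₀ b : Set X} (hV₀ : V₀ ∈ ClopSUp X)
    (hb : IsClopen b) (hbp : IsUpperSet b) (hbd : dOp b = b) (hkb : ¬ dOp V₀ ⊆ b) :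
    ∃ m : Set X, IsClopen m ∧ IsUpperSet m ∧ dOp m = m ∧ b ⊆ m ∧ ¬ dOp V₀ ⊆ m ∧
      ∀ m' : Set X, IsClopen m' → IsUpperSet m' → dOp m' = m' → m ⊆ m' →
        ¬ dOp V₀ ⊆ m' → m' = m := by
  set S : Set (Set X) :=
    {m | (IsClopen m ∧ IsUpperSet m ∧ dOp m = m) ∧ b ⊆ m ∧ ¬ dOp V₀ ⊆ m} with hS
  have hzorn : ∀ c ⊆ S, IsChain (· ⊆ ·) c → c.Nonempty → ∃ ub ∈ S, ∀ s ∈ c, s ⊆ ub := by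
    intro c hcS hchain hcne
    obtain ⟨m₀, hm₀⟩ := hcne
    have hcmem : ∀ A ∈ c, IsClopen A ∧ IsUpperSet A ∧ dOp A = A :=
      fun A hA => (hcS hA).1
    have hcl := clos_clopen hc (fun A hA => ⟨(hcmem A hA).1.2, (hcmem A hA).2.1⟩)
    set ub := dOp (closure (⋃₀ c)) with hub
    have hubc : IsClopen ub := L_dclopen hc hcl.1 hcl.2
    have hubp : IsUpperSet ub := L_dupper hc hcl.1 hcl.2
    have hubd : dOp ub = ub := L_didem hc hcl.1 hcl.2
    have hsub : ∀ A ∈ c, A ⊆ ub := fun A hA =>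
      ((subset_sUnion_of_mem hA).trans subset_closure).trans (L_subset_d hc hcl.1 hcl.2)
    have hbub : b ⊆ ub := (hcS hm₀).2.1.trans (hsub m₀ hm₀)
    have hkub : ¬ dOp V₀ ⊆ ub := by
      intro hk
      have hcdir : ∀ A ∈ c, ∀ B ∈ c, ∃ D ∈ c, A ⊆ D ∧ B ⊆ D := by
        intro A hA B hB
        rcases eq_or_ne A B with rfl | hAB
        · exact ⟨A, hA, subset_rfl, subset_rfl⟩
        · rcases hchain hA hB hAB with h | h
          · exact ⟨B, hB, h, subset_rfl⟩
          · exact ⟨A, hA, subset_rfl, h⟩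
      obtain ⟨A, hAc, hkA⟩ := L_dLcpt hc hV₀ ⟨m₀, hm₀⟩ hcdir hcmem hk
      exact (hcS hAc).2.2 hkA
    exact ⟨ub, ⟨⟨hubc, hubp, hubd⟩, hbub, hkub⟩, hsub⟩
  obtain ⟨m, _hbm, hm⟩ := zorn_subset_nonempty S hzorn b ⟨⟨hb, hbp, hbd⟩, subset_rfl, hkb⟩
  obtain ⟨⟨hmc, hmp, hmd⟩, hbm', hkm⟩ := hm.1
  refine ⟨m, hmc, hmp, hmd, hbm', hkm, ?_⟩
  intro m' h1 h2 h3 h4 h5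
  exact Subset.antisymm (hm.2 ⟨⟨h1, h2, h3⟩, hbm'.trans h4, h5⟩ h4) h4

private lemma L_memN (hc : St18Ctx X N) {z : X}
    (hcrit : ∀ U : Set X, IsClopen U → IsUpperSet U → z ∈ dOp U → z ∈ U) : z ∈ N := by
  by_contra hzN
  haveI := hc.hP.1
  have hK : IsCompact (upC ({z} : Set X) ∩ N) :=
    ((pr_isClosed_upC hc.hP isCompact_singleton).inter hc.hNcl).isCompact
  have hF₀c : IsClosed (upC (upC ({z} : Set X) ∩ N)) := pr_isClosed_upC hc.hP hK
  have hF₀u : IsUpperSet (upC (upC ({z} : Set X) ∩ N)) := isUpperSet_upC _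
  have hzF₀ : z ∉ upC (upC ({z} : Set X) ∩ N) := by
    rintro ⟨a, ⟨haz, haN⟩, haz'⟩
    have : a = z := le_antisymm haz' (mem_upC_singleton.mp haz)
    exact hzN (this ▸ haN)
  obtain ⟨U, hU, hUp, hFU, hzU⟩ := pr_sep_upset hc.hP hF₀c hF₀u hzF₀
  have hzd : z ∈ dOp U := by
    refine (L_dmem hc hU hUp).mpr fun n hn hzn => ?_
    exact hFU ⟨n, ⟨mem_upC_singleton.mpr hzn, hn⟩, le_rfl⟩
  exact hzU (hcrit U hU hUp hzd)

private lemma L_memY (hc : St18Ctx X N) {z : X}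
    (hcrit : ∀ S : Set (Set X), S.Nonempty →
      (∀ A ∈ S, ∀ B ∈ S, ∃ C ∈ S, A ⊆ C ∧ B ⊆ C) →
      (∀ A ∈ S, IsClopen A ∧ IsUpperSet A) →
      z ∈ closure (⋃₀ S) → ∃ A ∈ S, z ∈ A) :
    z ∈ localicPts X := by
  set S : Set (Set X) := {C | IsClopen C ∧ IsUpperSet C ∧ z ∉ C} with hSdef
  have hSne : S.Nonempty := ⟨∅, isClopen_empty, isUpperSet_empty, notMem_empty z⟩
  have hSdir : ∀ A ∈ S, ∀ B ∈ S, ∃ C ∈ S, A ⊆ C ∧ B ⊆ C := by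
    rintro A ⟨hA, hAp, hzA⟩ B ⟨hB, hBp, hzB⟩
    refine ⟨A ∪ B, ⟨hA.union hB, hAp.union hBp, ?_⟩, subset_union_left, subset_union_right⟩
    rintro (h | h)
    exacts [hzA h, hzB h]
  have hSmem : ∀ A ∈ S, IsClopen A ∧ IsUpperSet A := fun A hA => ⟨hA.1, hA.2.1⟩
  have hzB : z ∉ closure (⋃₀ S) := by
    intro hmem
    obtain ⟨A, hAS, hzA⟩ := hcrit S hSne hSdir hSmem hmem
    exact hAS.2.2 hzA
  have hBc := clos_clopen (S := S) hc (fun A hA => ⟨hA.1.2, hA.2.1⟩)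
  have hEq : dwC ({z} : Set X) = (closure (⋃₀ S))ᶜ := by
    apply Subset.antisymm
    · intro w hw
      intro hwB
      exact hzB (hBc.2 (mem_dwC_singleton.mp hw) hwB)
    · intro w hw
      refine mem_dwC_singleton.mpr ?_
      by_contra hwz
      obtain ⟨U, hU, hUp, hwU, hzU⟩ := hc.hP.2 w z hwz
      exact hw (subset_closure (⟨U, ⟨hU, hUp, hzU⟩, hwU⟩ :
        w ∈ ⋃₀ S))
  show IsClopen (dwC ({z} : Set X))
  rw [hEq]
  exact hBc.1.compl

private lemma L_point (hc : St18Ctx X N) {V₀ m : Set X} (hV₀ : V₀ ∈ ClopSUp X)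
    (hmc : IsClopen m) (hmp : IsUpperSet m) (hmd : dOp m = m) (hkm : ¬ dOp V₀ ⊆ m)
    (hmax : ∀ m' : Set X, IsClopen m' → IsUpperSet m' → dOp m' = m' → m ⊆ m' →
      ¬ dOp V₀ ⊆ m' → m' = m) :
    ∃ z, z ∈ N ∧ z ∈ localicPts X ∧
      ∀ U : Set X, IsClopen U → IsUpperSet U → (z ∈ U ↔ ¬ dOp U ⊆ m) := by
  classical
  haveI := hc.hP.1
  have F1 : ∀ c : Set X, IsClopen c → IsUpperSet c → dOp c = c → ¬ c ⊆ m →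
      dOp V₀ ⊆ dOp (m ∪ c) := by
    intro c h1 h2 _h3 h4
    by_contra hV
    have heq := hmax (dOp (m ∪ c)) (L_dclopen hc (hmc.union h1) (hmp.union h2))
      (L_dupper hc (hmc.union h1) (hmp.union h2))
      (L_didem hc (hmc.union h1) (hmp.union h2))
      (subset_union_left.trans (L_subset_d hc (hmc.union h1) (hmp.union h2))) hV
    apply h4
    calc c ⊆ m ∪ c := subset_union_right
      _ ⊆ dOp (m ∪ c) := L_subset_d hc (hmc.union h1) (hmp.union h2)
      _ = m := heq
  have F2 : ∀ U U' : Set X, IsClopen U → IsUpperSet U → IsClopen U' → IsUpperSet U' →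
      ¬ dOp U ⊆ m → ¬ dOp U' ⊆ m → ¬ dOp (U ∩ U') ⊆ m := by
    intro U U' hU hUp hU' hU'p h1 h2 hcontra
    have k1 := F1 (dOp U) (L_dclopen hc hU hUp) (L_dupper hc hU hUp) (L_didem hc hU hUp) h1
    have k2 := F1 (dOp U') (L_dclopen hc hU' hU'p) (L_dupper hc hU' hU'p)
      (L_didem hc hU' hU'p) h2
    have hsub : dOp V₀ ⊆ dOp (m ∪ dOp U) ∩ dOp (m ∪ dOp U') := subset_inter k1 k2
    rw [← L_dinter hc (hmc.union (L_dclopen hc hU hUp)) (hmp.union (L_dupper hc hU hUp))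
      (hmc.union (L_dclopen hc hU' hU'p)) (hmp.union (L_dupper hc hU' hU'p))] at hsub
    rw [← union_inter_distrib_left] at hsub
    rw [← L_dinter hc hU hUp hU' hU'p] at hsub
    have hfin : dOp (m ∪ dOp (U ∩ U')) ⊆ m := by
      refine (L_trace hc (hmc.union (L_dclopen hc (hU.inter hU') (hUp.inter hU'p)))
        (hmp.union (L_dupper hc (hU.inter hU') (hUp.inter hU'p))) hmc hmp hmd).mpr ?_
      rintro n ⟨_hnN, (hnm | hnd)⟩
      · exact hnm
      · exact hcontra hnd
    exact hkm (hsub.trans hfin)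
  have F4 : ∀ S : Set (Set X), S.Nonempty →
      (∀ A ∈ S, ∀ B ∈ S, ∃ C ∈ S, A ⊆ C ∧ B ⊆ C) →
      (∀ A ∈ S, IsClopen A ∧ IsUpperSet A) →
      ¬ dOp (closure (⋃₀ S)) ⊆ m → ∃ c ∈ S, ¬ dOp c ⊆ m := by
    intro S hSne hSdir hSmem hCm
    by_contra hno
    push_neg at hno
    have hCc := clos_clopen (S := S) hc (fun A hA => ⟨(hSmem A hA).1.2, (hSmem A hA).2⟩)
    have step1 : dOp V₀ ⊆ dOp (m ∪ dOp (closure (⋃₀ S))) :=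
      F1 (dOp (closure (⋃₀ S))) (L_dclopen hc hCc.1 hCc.2) (L_dupper hc hCc.1 hCc.2)
        (L_didem hc hCc.1 hCc.2) hCm
    have step2 : dOp (m ∪ dOp (closure (⋃₀ S))) = dOp (m ∪ closure (⋃₀ S)) := by
      refine L_dcongr hc (hmc.union (L_dclopen hc hCc.1 hCc.2))
        (hmp.union (L_dupper hc hCc.1 hCc.2)) (hmc.union hCc.1) (hmp.union hCc.2) ?_
      intro n hn
      constructor
      · rintro (h | h)
        exacts [Or.inl h, Or.inr (L_dtrans hc hCc.1 hCc.2 hn h)]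
      · rintro (h | h)
        exacts [Or.inl h, Or.inr (L_subset_d hc hCc.1 hCc.2 h)]
    have hTmem : ∀ A ∈ (fun c => m ∪ c) '' S, IsClopen A ∧ IsUpperSet A := by
      rintro A ⟨a, ha, rfl⟩
      exact ⟨hmc.union (hSmem a ha).1, hmp.union (hSmem a ha).2⟩
    have hTdir : ∀ A ∈ (fun c => m ∪ c) '' S, ∀ B ∈ (fun c => m ∪ c) '' S,
        ∃ D ∈ (fun c => m ∪ c) '' S, A ⊆ D ∧ B ⊆ D := by
      rintro A ⟨a, ha, rfl⟩ B ⟨b, hb, rfl⟩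
      obtain ⟨d, hd, had, hbd⟩ := hSdir a ha b hb
      exact ⟨m ∪ d, ⟨d, hd, rfl⟩, union_subset_union_right _ had,
        union_subset_union_right _ hbd⟩
    have step3 : m ∪ closure (⋃₀ S) = closure (⋃₀ ((fun c => m ∪ c) '' S)) := by
      have h1 : ⋃₀ ((fun c => m ∪ c) '' S) = m ∪ ⋃₀ S := by
        apply Subset.antisymm
        · rintro x ⟨A, ⟨a, ha, rfl⟩, hx⟩
          rcases hx with h | h
          exacts [Or.inl h, Or.inr ⟨a, ha, h⟩]
        · rintro x (h | h)
          · obtain ⟨a, ha⟩ := hSne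
            exact ⟨m ∪ a, ⟨a, ha, rfl⟩, Or.inl h⟩
          · obtain ⟨a, ha, hx⟩ := h
            exact ⟨m ∪ a, ⟨a, ha, rfl⟩, Or.inr hx⟩
      rw [h1, closure_union, hmc.1.closure_eq]
    have step4 : dOp V₀ ⊆ dOp (closure (⋃₀ (dOp '' ((fun c => m ∪ c) '' S)))) := by
      rw [L_joinid hc hTmem, ← step3, ← step2]
      exact step1
    have hTdmem : ∀ A ∈ dOp '' ((fun c => m ∪ c) '' S),
        IsClopen A ∧ IsUpperSet A ∧ dOp A = A := by
      rintro A ⟨a, ha, rfl⟩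
      exact ⟨L_dclopen hc (hTmem a ha).1 (hTmem a ha).2,
        L_dupper hc (hTmem a ha).1 (hTmem a ha).2, L_didem hc (hTmem a ha).1 (hTmem a ha).2⟩
    have hTddir : ∀ A ∈ dOp '' ((fun c => m ∪ c) '' S), ∀ B ∈ dOp '' ((fun c => m ∪ c) '' S),
        ∃ D ∈ dOp '' ((fun c => m ∪ c) '' S), A ⊆ D ∧ B ⊆ D := by
      rintro A ⟨a, ha, rfl⟩ B ⟨b, hb, rfl⟩
      obtain ⟨d, hd, had, hbd⟩ := hTdir a ha b hb
      exact ⟨dOp d, ⟨d, hd, rfl⟩,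
        L_dmono hc (hTmem a ha).1 (hTmem a ha).2 (hTmem d hd).1 (hTmem d hd).2 had,
        L_dmono hc (hTmem b hb).1 (hTmem b hb).2 (hTmem d hd).1 (hTmem d hd).2 hbd⟩
    obtain ⟨w, hwmem, hw⟩ := L_dLcpt hc hV₀ ((hSne.image _).image _) hTddir hTdmem step4
    obtain ⟨A, hAT, rfl⟩ := hwmem
    obtain ⟨c₀, hc₀, rfl⟩ := hAT
    have hfin : dOp (m ∪ c₀) ⊆ m := by
      refine (L_trace hc (hmc.union (hSmem c₀ hc₀).1) (hmp.union (hSmem c₀ hc₀).2)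
        hmc hmp hmd).mpr ?_
      rintro n ⟨_hnN, (h | h)⟩
      · exact h
      · exact hno c₀ hc₀ (L_subset_d hc (hSmem c₀ hc₀).1 (hSmem c₀ hc₀).2 h)
    exact hkm (hw.trans hfin)
  have hTexists : ∃ z : X, ∀ U : Set X, IsClopen U → IsUpperSet U →
      (z ∈ U ↔ ¬ dOp U ⊆ m) := by
    by_contra hT
    have hT' : ∀ z : X, ∃ U : Set X, IsClopen U ∧ IsUpperSet U ∧
        ((dOp U ⊆ m ∧ z ∈ U) ∨ (¬ dOp U ⊆ m ∧ z ∉ U)) := by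
      intro z
      by_contra hz
      apply hT
      refine ⟨z, fun U hU hUp => ?_⟩
      constructor
      · intro hzU hdm
        exact hz ⟨U, hU, hUp, Or.inl ⟨hdm, hzU⟩⟩
      · intro hdm
        by_contra hzU
        exact hz ⟨U, hU, hUp, Or.inr ⟨hdm, hzU⟩⟩
    choose Ux h1 h2 h3 using hT'
    have hOopen : ∀ x, IsOpen (if dOp (Ux x) ⊆ m then Ux x else (Ux x)ᶜ) := by
      intro x
      split_ifs with hd
      · exact (h1 x).2
      · exact (h1 x).compl.2
    have hxO : ∀ x, x ∈ (if dOp (Ux x) ⊆ m then Ux x else (Ux x)ᶜ) := by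
      intro x
      rcases h3 x with ⟨hd, hx⟩ | ⟨hd, hx⟩
      · rw [if_pos hd]; exact hx
      · rw [if_neg hd]; exact hx
    obtain ⟨t, ht⟩ := isCompact_univ.elim_finite_subcover
      (fun x => if dOp (Ux x) ⊆ m then Ux x else (Ux x)ᶜ) hOopen
      (fun x _ => mem_iUnion.mpr ⟨x, hxO x⟩)
    have hInter : ∀ s : Finset X, (∀ i ∈ s, ¬ dOp (Ux i) ⊆ m) →
        IsClopen (⋂ i ∈ s, Ux i) ∧ IsUpperSet (⋂ i ∈ s, Ux i) ∧
          ¬ dOp (⋂ i ∈ s, Ux i) ⊆ m := by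
      intro s
      induction s using Finset.induction_on with
      | empty =>
        intro _
        have he : (⋂ i ∈ (∅ : Finset X), Ux i) = univ := by simp
        rw [he]
        refine ⟨isClopen_univ, isUpperSet_univ, ?_⟩
        rw [L_duniv hc]
        intro hu
        exact hkm ((subset_univ _).trans hu)
      | @insert a s _ha ih =>
        intro hmem
        have hins : (⋂ i ∈ insert a s, Ux i) = Ux a ∩ ⋂ i ∈ s, Ux i :=
          Finset.set_biInter_insert a s Ux
        obtain ⟨ic, iu, im⟩ := ih (fun i hi => hmem i (Finset.mem_insert_of_mem hi))
        rw [hins]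
        exact ⟨(h1 a).inter ic, (h2 a).inter iu,
          F2 _ _ (h1 a) (h2 a) ic iu (hmem a (Finset.mem_insert_self a s)) im⟩
    have hA := hInter (t.filter (fun x => ¬ dOp (Ux x) ⊆ m))
      (fun i hi => (Finset.mem_filter.mp hi).2)
    have hBsub : dOp (⋃ i ∈ t.filter (fun x => dOp (Ux x) ⊆ m), Ux i) ⊆ m := by
      refine (L_trace hc (isClopen_biUnion_finset fun i _ => h1 i)
        (isUpperSet_iUnion₂ fun i _ => h2 i) hmc hmp hmd).mpr ?_
      rintro n ⟨_hnN, hnB⟩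
      obtain ⟨i, hit, hni⟩ := mem_iUnion₂.mp hnB
      exact (Finset.mem_filter.mp hit).2 (L_subset_d hc (h1 i) (h2 i) hni)
    have hAB : (⋂ i ∈ t.filter (fun x => ¬ dOp (Ux x) ⊆ m), Ux i) ⊆
        ⋃ i ∈ t.filter (fun x => dOp (Ux x) ⊆ m), Ux i := by
      intro x hx
      obtain ⟨i, hit, hxOi⟩ := mem_iUnion₂.mp (ht (mem_univ x))
      by_cases hd : dOp (Ux i) ⊆ m
      · refine mem_iUnion₂.mpr ⟨i, Finset.mem_filter.mpr ⟨hit, hd⟩, ?_⟩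
        rwa [if_pos hd] at hxOi
      · exfalso
        rw [if_neg hd] at hxOi
        exact hxOi (mem_iInter₂.mp hx i (Finset.mem_filter.mpr ⟨hit, hd⟩))
    exact hA.2.2 ((L_dmono hc hA.1 hA.2.1 (isClopen_biUnion_finset fun i _ => h1 i)
      (isUpperSet_iUnion₂ fun i _ => h2 i) hAB).trans hBsub)
  obtain ⟨z, hz⟩ := hTexists
  have hzN : z ∈ N := by
    apply L_memN hc
    intro U hU hUp hzd
    have h1 := (hz (dOp U) (L_dclopen hc hU hUp) (L_dupper hc hU hUp)).mp hzd
    rw [L_didem hc hU hUp] at h1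
    exact (hz U hU hUp).mpr h1
  have hzY : z ∈ localicPts X := by
    apply L_memY hc
    intro S hSne hSdir hSmem hzcl
    have hCc := clos_clopen (S := S) hc (fun A hA => ⟨(hSmem A hA).1.2, (hSmem A hA).2⟩)
    have h1 := (hz _ hCc.1 hCc.2).mp hzcl
    obtain ⟨c, hcS, hcm⟩ := F4 S hSne hSdir hSmem h1
    exact ⟨c, hcS, (hz c (hSmem c hcS).1 (hSmem c hcS).2).mpr hcm⟩
  exact ⟨z, hzN, hzY, hz⟩

private lemma L_min (hc : St18Ctx X N) {V₀ m : Set X} {z : X}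
    (hV₀u : dOp V₀ = univ)
    (hmc : IsClopen m) (hmp : IsUpperSet m) (hmd : dOp m = m)
    (hmax : ∀ m' : Set X, IsClopen m' → IsUpperSet m' → dOp m' = m' → m ⊆ m' →
      ¬ dOp V₀ ⊆ m' → m' = m)
    (hzchar : ∀ U : Set X, IsClopen U → IsUpperSet U → (z ∈ U ↔ ¬ dOp U ⊆ m)) :
    ∀ z', z' ∈ N → z' ∈ localicPts X → z' ≤ z → z' = z := by
  intro z' hz'N hz'Y hz'z
  set S : Set (Set X) := {c | IsClopen c ∧ IsUpperSet c ∧ dOp c = c ∧ z' ∉ c} with hSdef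
  have hSop : ∀ A ∈ S, IsOpen A ∧ IsUpperSet A := fun A hA => ⟨hA.1.2, hA.2.1⟩
  have hq := clos_clopen (S := S) hc hSop
  have hqc : IsClopen (dOp (closure (⋃₀ S))) := L_dclopen hc hq.1 hq.2
  have hqp : IsUpperSet (dOp (closure (⋃₀ S))) := L_dupper hc hq.1 hq.2
  have hqd : dOp (dOp (closure (⋃₀ S))) = dOp (closure (⋃₀ S)) := L_didem hc hq.1 hq.2
  have hz'm : z' ∉ m := by
    intro hz'm
    have hzm : z ∈ m := hmp hz'z hz'm
    exact (hzchar m hmc hmp).mp hzm hmd.subset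
  have hmS : m ∈ S := ⟨hmc, hmp, hmd, hz'm⟩
  have hmq : m ⊆ dOp (closure (⋃₀ S)) :=
    ((subset_sUnion_of_mem hmS).trans subset_closure).trans (L_subset_d hc hq.1 hq.2)
  have hz'q : z' ∉ dOp (closure (⋃₀ S)) := by
    intro hmem
    have hz'cl : z' ∈ closure (⋃₀ S) := L_dtrans hc hq.1 hq.2 hz'N hmem
    obtain ⟨w, hw⟩ := mem_closure_iff.mp hz'cl (dwC {z'}) hz'Y.2
      (mem_dwC_singleton.mpr le_rfl)
    obtain ⟨c, hcS, hwc⟩ := hw.2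
    exact hcS.2.2.2 (hcS.2.1 (mem_dwC_singleton.mp hw.1) hwc)
  have hqk : ¬ dOp V₀ ⊆ dOp (closure (⋃₀ S)) := by
    rw [hV₀u]
    intro hu
    exact hz'q (hu (mem_univ z'))
  have hqm : dOp (closure (⋃₀ S)) = m := hmax _ hqc hqp hqd hmq hqk
  have hzz' : z ≤ z' := by
    apply pr_le_of_forall hc.hP
    intro U hU hUp hzU
    have hne : ¬ dOp U ⊆ m := (hzchar U hU hUp).mp hzU
    have hz'dU : z' ∈ dOp U := by
      by_contra h'
      have hdUS : dOp U ∈ S :=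
        ⟨L_dclopen hc hU hUp, L_dupper hc hU hUp, L_didem hc hU hUp, h'⟩
      have : dOp U ⊆ m := by
        rw [← hqm]
        exact ((subset_sUnion_of_mem hdUS).trans subset_closure).trans
          (L_subset_d hc hq.1 hq.2)
      exact hne this
    exact L_dtrans hc hU hUp hz'N hz'dU
  exact le_antisymm hz'z hzz'

private lemma L_unit (hc : St18Ctx X N) {U : Set X} (hU : U ∈ ClopSUp X)
    (hmax : maxOf (univ : Set X) ⊆ U) : dOp U = univ ∧ N ⊆ U := by
  have h1 : dwC U = univ := by
    apply eq_univ_of_forall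
    intro x
    obtain ⟨mm, hxm, hm⟩ := pr_exists_max hc.hP x
    exact ⟨mm, hmax hm, hxm⟩
  have h2 : starC (starC U) = univ := by
    unfold starC
    rw [h1, compl_univ, dwC_empty, compl_empty]
  have h3 : dOp U = univ :=
    univ_subset_iff.mp (h2 ▸ star2_subset_dOp hU subset_rfl)
  refine ⟨h3, fun n hn => ?_⟩
  exact L_dtrans hc hU.1 hU.2.2.1 hn (h3 ▸ mem_univ n)

private lemma L_cover (hc : St18Ctx X N) {U₀ : Set X} (hU₀ : U₀ ∈ ClopSUp X)
    (hU₀d : dOp U₀ = univ) {ι : Type*} (f : ι → Set X)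
    (hf : ∀ i, IsClopen (f i) ∧ IsUpperSet (f i))
    (hcov : minOf (N ∩ localicPts X) ⊆ ⋃ i, f i) :
    ∃ t : Finset ι, minOf (N ∩ localicPts X) ⊆ ⋃ i ∈ t, f i := by
  classical
  set S : Set (Set X) := {V | ∃ t : Finset ι, V = ⋃ i ∈ t, f i} with hSdef
  have hSne : S.Nonempty := ⟨⋃ i ∈ (∅ : Finset ι), f i, ∅, rfl⟩
  have hSmem : ∀ V ∈ S, IsClopen V ∧ IsUpperSet V := by
    rintro V ⟨t, rfl⟩
    exact ⟨isClopen_biUnion_finset fun i _ => (hf i).1,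
      isUpperSet_iUnion₂ fun i _ => (hf i).2⟩
  have hSdir : ∀ A ∈ S, ∀ B ∈ S, ∃ C ∈ S, A ⊆ C ∧ B ⊆ C := by
    rintro A ⟨t1, rfl⟩ B ⟨t2, rfl⟩
    refine ⟨⋃ i ∈ t1 ∪ t2, f i, ⟨t1 ∪ t2, rfl⟩, ?_, ?_⟩
    · exact biUnion_subset_biUnion_left (fun i hi => Finset.mem_union_left _ hi)
    · exact biUnion_subset_biUnion_left (fun i hi => Finset.mem_union_right _ hi)
  by_cases hdC : dOp (closure (⋃₀ S)) = univ
  · have h1 : dOp U₀ ⊆ dOp (closure (⋃₀ (dOp '' S))) := by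
      rw [L_joinid hc hSmem, hdC]
      exact subset_univ _
    have hSdmem : ∀ A ∈ dOp '' S, IsClopen A ∧ IsUpperSet A ∧ dOp A = A := by
      rintro A ⟨a, ha, rfl⟩
      exact ⟨L_dclopen hc (hSmem a ha).1 (hSmem a ha).2,
        L_dupper hc (hSmem a ha).1 (hSmem a ha).2, L_didem hc (hSmem a ha).1 (hSmem a ha).2⟩
    have hSddir : ∀ A ∈ dOp '' S, ∀ B ∈ dOp '' S, ∃ D ∈ dOp '' S, A ⊆ D ∧ B ⊆ D := by
      rintro A ⟨a, ha, rfl⟩ B ⟨b, hb, rfl⟩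
      obtain ⟨d, hd, had, hbd⟩ := hSdir a ha b hb
      exact ⟨dOp d, ⟨d, hd, rfl⟩,
        L_dmono hc (hSmem a ha).1 (hSmem a ha).2 (hSmem d hd).1 (hSmem d hd).2 had,
        L_dmono hc (hSmem b hb).1 (hSmem b hb).2 (hSmem d hd).1 (hSmem d hd).2 hbd⟩
    obtain ⟨w, hwmem, hw⟩ := L_dLcpt hc hU₀ (hSne.image _) hSddir hSdmem h1
    obtain ⟨A, hAS, rfl⟩ := hwmem
    obtain ⟨t, rfl⟩ := hAS
    refine ⟨t, fun p hp => ?_⟩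
    have hpN : p ∈ N := hp.1.1
    have hpd : p ∈ dOp (⋃ i ∈ t, f i) := hw (by rw [hU₀d]; exact mem_univ p)
    exact L_dtrans hc (hSmem _ ⟨t, rfl⟩).1 (hSmem _ ⟨t, rfl⟩).2 hpN hpd
  · have hb := clos_clopen (S := S) hc (fun A hA => ⟨(hSmem A hA).1.2, (hSmem A hA).2⟩)
    have hbc : IsClopen (dOp (closure (⋃₀ S))) := L_dclopen hc hb.1 hb.2
    have hbp : IsUpperSet (dOp (closure (⋃₀ S))) := L_dupper hc hb.1 hb.2
    have hbd : dOp (dOp (closure (⋃₀ S))) = dOp (closure (⋃₀ S)) := L_didem hc hb.1 hb.2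
    have hkb : ¬ dOp U₀ ⊆ dOp (closure (⋃₀ S)) := by
      rw [hU₀d]
      intro hu
      exact hdC (univ_subset_iff.mp hu)
    obtain ⟨m, hmc, hmp, hmd, hbm, hkm, hmax⟩ := L_zorn hc hU₀ hbc hbp hbd hkb
    obtain ⟨z, hzN, hzY, hzchar⟩ := L_point hc hU₀ hmc hmp hmd hkm hmax
    have hzmin : z ∈ minOf (N ∩ localicPts X) :=
      ⟨⟨hzN, hzY⟩, fun w hw hwz => L_min hc hU₀d hmc hmp hmd hmax hzchar w hw.1 hw.2 hwz⟩
    obtain ⟨i, hzi⟩ := mem_iUnion.mp (hcov hzmin)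
    exfalso
    apply (hzchar (f i) (hf i).1 (hf i).2).mp hzi
    have hfi : f i ⊆ closure (⋃₀ S) := by
      refine subset_closure.trans' ?_
      intro x hx
      exact ⟨⋃ j ∈ ({i} : Finset ι), f j, ⟨{i}, rfl⟩, mem_iUnion₂.mpr ⟨i, Finset.mem_singleton_self i, hx⟩⟩
    exact (L_dmono hc (hf i).1 (hf i).2 hb.1 hb.2 hfi).trans hbm

end St18Main

/-- Let `X` be an arithmetic L-space and `N = N_d` the nuclear subset
whose nucleus `j_N` is the `d`-nucleus, with `Y_d = N_d ∩ Y`. Then there is a clopen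
Scott upset containing `max X` iff there is one containing `Y_d`; and if such a clopen
Scott upset exists, then `min Y_d` (with the topology whose opens are the traces of
clopen upsets of `X`) is compact. -/
theorem statement18 (hX : IsArithmeticLSpace X)
    (N : Set X) (hN : IsNuclearSub N)
    (hNd : ∀ U : Set X, IsClopen U → IsUpperSet U → jN N U = dOp U) :
    ((∃ U ∈ ClopSUp X, maxOf (Set.univ : Set X) ⊆ U) ↔
      (∃ U ∈ ClopSUp X, N ∩ localicPts X ⊆ U)) ∧
    ((∃ U ∈ ClopSUp X, maxOf (Set.univ : Set X) ⊆ U) →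
      @CompactSpace _ (traceTop (minOf (N ∩ localicPts X)))) := by
  have hc : St18Ctx X N := ⟨hX.1.1.1, hX.1.1.2, hN.1, hN.2, hNd⟩
  constructor
  · constructor
    · rintro ⟨U, hU, hmax⟩
      exact ⟨U, hU, fun y hy => (L_unit hc hU hmax).2 hy.1⟩
    · rintro ⟨V₁, hV₁, hV₁Y⟩
      by_cases hall : ∀ W ∈ ClopSUp X, dOp W ⊆ dOp V₁
      · have hduniv : dOp (univ : Set X) = univ := L_duniv hc
        have hsub : (univ : Set X) ⊆ dOp V₁ := by
          rw [← hduniv]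
          have hclosed : IsClosed (dOp V₁) := (L_dclopen hc hV₁.1 hV₁.2.2.1).1
          show closure (⋃₀ {W : Set X | ∃ V ∈ ClopSUp X,
            V ⊆ (univ : Set X) ∧ W = starC (starC V)}) ⊆ dOp V₁
          apply closure_minimal ?_ hclosed
          rintro x ⟨W, ⟨V, hV, -, rfl⟩, hxW⟩
          exact hall V hV (star2_subset_dOp hV subset_rfl hxW)
        have hV₁univ : dOp V₁ = univ := univ_subset_iff.mp hsub
        have hNV₁ : N ⊆ V₁ := fun n hn =>
          L_dtrans hc hV₁.1 hV₁.2.2.1 hn (hV₁univ ▸ mem_univ n)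
        exact ⟨V₁, hV₁, fun p hp => hNV₁ (L_maxN hc hp)⟩
      · push_neg at hall
        obtain ⟨W₁, hW₁, hW₁m⟩ := hall
        obtain ⟨m, hmc, hmp, hmd, hbm, hkm, hmax⟩ := L_zorn hc hW₁
          (L_dclopen hc hV₁.1 hV₁.2.2.1) (L_dupper hc hV₁.1 hV₁.2.2.1)
          (L_didem hc hV₁.1 hV₁.2.2.1) hW₁m
        obtain ⟨z, hzN, hzY, hzchar⟩ := L_point hc hW₁ hmc hmp hmd hkm hmax
        exact absurd hbm ((hzchar V₁ hV₁.1 hV₁.2.2.1).mp (hV₁Y ⟨hzN, hzY⟩))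
  · rintro ⟨U₀, hU₀, hmaxU₀⟩
    obtain ⟨hd0, _hNsub⟩ := L_unit hc hU₀ hmaxU₀
    have hbasis : ∀ V : Set ↥(minOf (N ∩ localicPts X)),
        TopologicalSpace.GenerateOpen
          {V' : Set ↥(minOf (N ∩ localicPts X)) | ∃ U : Set X,
            IsClopen U ∧ IsUpperSet U ∧ V' = Subtype.val ⁻¹' U} V →
        ∀ x ∈ V, ∃ U : Set X, IsClopen U ∧ IsUpperSet U ∧
          (x : X) ∈ U ∧ (Subtype.val ⁻¹' U : Set ↥(minOf (N ∩ localicPts X))) ⊆ V := by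
      intro V hV
      induction hV with
      | basic s hs =>
        intro x hx
        obtain ⟨U, h1, h2, rfl⟩ := hs
        exact ⟨U, h1, h2, hx, subset_rfl⟩
      | univ =>
        intro x _
        exact ⟨univ, isClopen_univ, isUpperSet_univ, trivial, subset_univ _⟩
      | inter s t _hs _ht ihs iht =>
        intro x hx
        obtain ⟨U1, hU1, hU1p, hxU1, hU1s⟩ := ihs x hx.1
        obtain ⟨U2, hU2, hU2p, hxU2, hU2s⟩ := iht x hx.2
        refine ⟨U1 ∩ U2, hU1.inter hU2, hU1p.inter hU2p, ⟨hxU1, hxU2⟩, ?_⟩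
        intro y hy
        exact ⟨hU1s hy.1, hU2s hy.2⟩
      | sUnion Ss _hSs ih =>
        intro x hx
        obtain ⟨s, hsS, hxs⟩ := hx
        obtain ⟨U, hU, hUp, hxU, hUs⟩ := ih s hsS x hxs
        exact ⟨U, hU, hUp, hxU, hUs.trans (subset_sUnion_of_mem hsS)⟩
    refine @CompactSpace.mk _ (traceTop (minOf (N ∩ localicPts X))) ?_
    apply @isCompact_of_finite_subcover _ (traceTop (minOf (N ∩ localicPts X))) _
    intro ι Us hUs hcovS
    classical
    have hx : ∀ x : ↥(minOf (N ∩ localicPts X)), ∃ i, x ∈ Us i :=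
      fun x => mem_iUnion.mp (hcovS (mem_univ x))
    choose idx hidx using hx
    have hUbasis : ∀ x : ↥(minOf (N ∩ localicPts X)), ∃ U : Set X,
        IsClopen U ∧ IsUpperSet U ∧ (x : X) ∈ U ∧ Subtype.val ⁻¹' U ⊆ Us (idx x) :=
      fun x => hbasis (Us (idx x)) (hUs (idx x)) x (hidx x)
    choose g hg1 hg2 hg3 hg4 using hUbasis
    have hgcov : minOf (N ∩ localicPts X) ⊆ ⋃ s, g s := by
      intro p hp
      exact mem_iUnion.mpr ⟨⟨p, hp⟩, hg3 ⟨p, hp⟩⟩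
    obtain ⟨t, ht⟩ := L_cover hc hU₀ hd0 g (fun s => ⟨hg1 s, hg2 s⟩) hgcov
    refine ⟨t.image idx, ?_⟩
    intro x _
    obtain ⟨s, hst, hxs⟩ := mem_iUnion₂.mp (ht x.2)
    exact mem_iUnion₂.mpr ⟨idx s, Finset.mem_image_of_mem idx hst, hg4 s hxs⟩
end

section
/- There exists an arithmetic L-space X such that min Y_d, topologized so that its open sets are exactly the traces U ∩ min Y_d of clopen upsets U of X, is not Hausdorff. (Consequently, there exists an arithmetic frame whose maximal d-spectrum is not Hausdorff.) -/
open Set Topology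

variable {X : Type*} [TopologicalSpace X] [PartialOrder X]

namespace St19

open OnePoint

abbrev Cpt : Type := OnePoint ℕ
abbrev Beta : Type := Ultrafilter (ℕ × ℕ)
abbrev XX : Type := Cpt ⊕ Beta

def RRb (n : ℕ) : Set (ℕ × ℕ) := {p | p.1 = n}

def SSb (K : ℕ) : Set (ℕ × ℕ) := {p | K ≤ p.1}

def lamStar (u : Beta) : Prop := ∀ n, RRb n ∉ u

def freeU (u : Beta) : Prop := ∀ s : Set (ℕ × ℕ), s.Finite → s ∉ u

def leX : XX → XX → Prop
  | Sum.inl x, Sum.inl y => x = y ∨ y = ∞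
  | Sum.inl x, Sum.inr u => lamStar u ∨ ∃ n : ℕ, x = (n : Cpt) ∧ RRb n ∈ u
  | Sum.inr _, Sum.inl _ => False
  | Sum.inr u, Sum.inr v => u = v

instance instPOXX : PartialOrder XX where
  le := leX
  le_refl x := by cases x with
    | inl x => exact Or.inl rfl
    | inr u => exact rfl
  le_trans a b c hab hbc := by
    cases a with
    | inl x =>
      cases b with
      | inl y =>
        cases c with
        | inl z =>
          rcases hab with rfl | rfl
          · exact hbc
          · rcases hbc with rfl | rfl
            · exact Or.inr rfl
            · exact Or.inr rfl
        | inr u =>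
          rcases hab with rfl | rfl
          · exact hbc
          · rcases hbc with h | ⟨n, hn, _⟩
            · exact Or.inl h
            · exact absurd hn.symm (OnePoint.coe_ne_infty n)
      | inr u =>
        cases c with
        | inl z => exact absurd hbc id
        | inr v =>
          have huv : u = v := hbc
          rw [← huv] at *
          exact hab
    | inr u =>
      cases b with
      | inl y => exact absurd hab id
      | inr v =>
        have huv : u = v := hab
        rw [huv]
        exact hbc
  le_antisymm a b hab hba := by
    cases a with
    | inl x =>
      cases b with
      | inl y =>
        rcases hab with rfl | rfl
        · rfl
        · rcases hba with rfl | rfl <;> rfl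
      | inr u => exact absurd hba id
    | inr u =>
      cases b with
      | inl y => exact absurd hab id
      | inr v => exact congrArg Sum.inr hab

def σp (n : ℕ) : XX := Sum.inl (n : Cpt)

def Λp : XX := Sum.inl ∞

def Bset (s : Set (ℕ × ℕ)) : Set Beta := {u | s ∈ u}

lemma le_inl_inl {x y : Cpt} : (Sum.inl x : XX) ≤ Sum.inl y ↔ x = y ∨ y = ∞ := Iff.rfl

lemma le_inl_inr {x : Cpt} {u : Beta} :
    (Sum.inl x : XX) ≤ Sum.inr u ↔ lamStar u ∨ ∃ n : ℕ, x = (n : Cpt) ∧ RRb n ∈ u := Iff.rfl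

lemma le_inr_inl {u : Beta} {y : Cpt} : ¬ ((Sum.inr u : XX) ≤ Sum.inl y) := fun h => h

lemma le_inr_inr {u v : Beta} : (Sum.inr u : XX) ≤ Sum.inr v ↔ u = v := Iff.rfl

lemma σp_ne_Λp (n : ℕ) : σp n ≠ Λp := by
  simp only [σp, Λp, ne_eq, Sum.inl.injEq]
  exact OnePoint.coe_ne_infty n

lemma σp_le_Λp (n : ℕ) : σp n ≤ Λp := Or.inr rfl

lemma σp_inj {m n : ℕ} (h : σp m = σp n) : m = n := by
  simpa [σp, OnePoint.coe_eq_coe] using h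

lemma le_sigma {w : XX} {n : ℕ} (h : w ≤ σp n) : w = σp n := by
  cases w with
  | inl y =>
    rcases (le_inl_inl.mp h) with rfl | h'
    · rfl
    · exact absurd h' (OnePoint.coe_ne_infty n)
  | inr u => exact absurd h le_inr_inl

lemma inr_le {u : Beta} {w : XX} (h : (Sum.inr u : XX) ≤ w) : w = Sum.inr u := by
  cases w with
  | inl y => exact absurd h le_inr_inl
  | inr v => rw [le_inr_inr.mp h]

lemma sigma_le_inr {n : ℕ} {u : Beta} (h : RRb n ∈ u) : σp n ≤ Sum.inr u :=
  Or.inr ⟨n, rfl, h⟩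

lemma Lam_le_inr {u : Beta} (h : lamStar u) : Λp ≤ Sum.inr u := Or.inl h

/-! ### ultrafilter topology facts -/

lemma isClopen_Bset (s : Set (ℕ × ℕ)) : IsClopen (Bset s) :=
  ⟨ultrafilter_isClosed_basic s, ultrafilter_isOpen_basic s⟩

lemma mem_nbhd_basic {O : Set Beta} (hO : IsOpen O) {z : Beta} (hz : z ∈ O) :
    ∃ s ∈ z, Bset s ⊆ O := by
  rcases ultrafilterBasis_is_basis.isOpen_iff.mp hO z hz with ⟨t, ht, hzt, htO⟩
  rcases ht with ⟨s, rfl⟩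
  exact ⟨s, hzt, htO⟩

lemma pure_mem_Bset {s : Set (ℕ × ℕ)} {a : ℕ × ℕ} (ha : a ∈ s) : (pure a : Beta) ∈ Bset s :=
  Ultrafilter.mem_pure.mpr ha

lemma closure_open_eq {O : Set Beta} (hO : IsOpen O) :
    closure O = Bset {a | (pure a : Beta) ∈ O} := by
  apply Subset.antisymm
  · apply closure_minimal _ (ultrafilter_isClosed_basic _)
    intro z hz
    obtain ⟨s, hs, hsub⟩ := mem_nbhd_basic hO hz
    exact Filter.mem_of_superset hs fun a ha => hsub (pure_mem_Bset ha)
  · intro z hz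
    rw [mem_closure_iff]
    intro O' hO' hzO'
    obtain ⟨s, hs, hsub⟩ := mem_nbhd_basic hO' hzO'
    obtain ⟨a, ha⟩ := Ultrafilter.nonempty_of_mem (Filter.inter_mem hs hz)
    exact ⟨pure a, hsub (pure_mem_Bset ha.1), ha.2⟩

lemma isClopen_closure_open {O : Set Beta} (hO : IsOpen O) : IsClopen (closure O) := by
  rw [closure_open_eq hO]; exact isClopen_Bset _

lemma clopen_eq_Bset {P : Set Beta} (hP : IsClopen P) :
    P = Bset {a | (pure a : Beta) ∈ P} := by
  have := closure_open_eq hP.2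
  rwa [hP.1.closure_eq] at this

lemma Bset_singleton (a : ℕ × ℕ) : Bset {a} = {(pure a : Beta)} := by
  ext u
  simp only [Bset, mem_setOf_eq, mem_singleton_iff]
  constructor
  · intro h
    obtain ⟨x, hx, rfl⟩ := Ultrafilter.eq_pure_of_finite_mem (finite_singleton a) h
    rw [mem_singleton_iff] at hx; rw [hx]
  · rintro rfl; exact Ultrafilter.mem_pure.mpr rfl

lemma isClopen_pure_singleton (a : ℕ × ℕ) : IsClopen ({(pure a : Beta)} : Set Beta) := by
  rw [← Bset_singleton]; exact isClopen_Bset _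

lemma exists_free_mem {T : Set (ℕ × ℕ)} (hT : T.Infinite) :
    ∃ z : Beta, T ∈ z ∧ freeU z := by
  haveI hne : (Filter.cofinite ⊓ Filter.principal T).NeBot :=
    Filter.cofinite_inf_principal_neBot_iff.mpr hT
  have hle : (↑(Ultrafilter.of (Filter.cofinite ⊓ Filter.principal T)) : Filter (ℕ × ℕ)) ≤
      Filter.cofinite ⊓ Filter.principal T := Ultrafilter.of_le _
  refine ⟨Ultrafilter.of (Filter.cofinite ⊓ Filter.principal T), ?_, ?_⟩
  · exact hle (Filter.mem_inf_of_right (Filter.mem_principal_self T))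
  · intro s hs hsz
    have h1 : sᶜ ∈ Ultrafilter.of (Filter.cofinite ⊓ Filter.principal T) :=
      hle (Filter.mem_inf_of_left hs.compl_mem_cofinite)
    exact (Ultrafilter.compl_mem_iff_notMem.mp h1) hsz

lemma freeU.not_pure {z : Beta} (hz : freeU z) : ¬ ∃ p, z = pure p := by
  rintro ⟨p, rfl⟩
  exact hz {p} (finite_singleton p) (Ultrafilter.mem_pure.mpr rfl)

lemma RRb_infinite (n : ℕ) : (RRb n).Infinite :=
  Set.infinite_of_injective_forall_mem (f := fun k : ℕ => ((n, k) : ℕ × ℕ))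
    (fun a b hab => by simpa using hab) (fun k => by simp [RRb])

lemma exists_free_RRb (n : ℕ) : ∃ z : Beta, RRb n ∈ z ∧ freeU z :=
  exists_free_mem (RRb_infinite n)

lemma exists_free_lamStar : ∃ z : Beta, lamStar z ∧ freeU z := by
  have hT : (Set.range fun k : ℕ => ((k, 0) : ℕ × ℕ)).Infinite :=
    Set.infinite_range_of_injective (fun a b hab => by simpa using hab)
  obtain ⟨z, hTz, hfree⟩ := exists_free_mem hT
  refine ⟨z, ?_, hfree⟩
  intro n hn
  have h2 : RRb n ∩ Set.range (fun k : ℕ => ((k, 0) : ℕ × ℕ)) ∈ z := Filter.inter_mem hn hTz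
  have hsub : RRb n ∩ Set.range (fun k : ℕ => ((k, 0) : ℕ × ℕ)) ⊆ {((n, 0) : ℕ × ℕ)} := by
    rintro p ⟨hp1, k, rfl⟩
    simp only [RRb, mem_setOf_eq] at hp1
    simp [hp1]
  exact hfree _ ((finite_singleton _).subset hsub) h2

lemma RRb_unique {z : Beta} {m n : ℕ} (hm : RRb m ∈ z) (hn : RRb n ∈ z) : m = n := by
  obtain ⟨p, hp⟩ := Ultrafilter.nonempty_of_mem (Filter.inter_mem hm hn)
  exact hp.1.symm.trans hp.2

lemma not_lamStar_iff {z : Beta} : ¬ lamStar z ↔ ∃ n, RRb n ∈ z := by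
  simp [lamStar]

lemma SSb_mem_of_RRb {z : Beta} {m K : ℕ} (h : RRb m ∈ z) (hK : K ≤ m) : SSb K ∈ z :=
  Filter.mem_of_superset h (by rintro p hp; simp only [RRb, mem_setOf_eq] at hp
                               simp [SSb, hp, hK])

lemma SSb_mem_of_lamStar {z : Beta} (h : lamStar z) (K : ℕ) : SSb K ∈ z := by
  by_contra h'
  have hc : (SSb K)ᶜ ∈ z := Ultrafilter.compl_mem_iff_notMem.mpr h'
  have he : (SSb K)ᶜ = ⋃ m ∈ Set.Iio K, RRb m := by
    ext p
    simp only [SSb, mem_compl_iff, mem_setOf_eq, not_le, mem_iUnion, RRb, Set.mem_Iio]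
    constructor
    · intro hp; exact ⟨p.1, hp, rfl⟩
    · rintro ⟨m, hm, rfl⟩; exact hm
  rw [he] at hc
  obtain ⟨m, _, hm⟩ := (Ultrafilter.finite_biUnion_mem_iff (Set.finite_Iio K)).mp hc
  exact h m hm

lemma le_of_SSb_RRb {z : Beta} {m K : ℕ} (hS : SSb K ∈ z) (hm : RRb m ∈ z) : K ≤ m := by
  obtain ⟨p, hp⟩ := Ultrafilter.nonempty_of_mem (Filter.inter_mem hS hm)
  have h1 : K ≤ p.1 := hp.1
  have h2 : p.1 = m := hp.2
  omega

/-! ### clopen sets in `XX` -/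

lemma isClopen_inl_image {s : Set Cpt} (h : IsClopen s) : IsClopen (Sum.inl '' s : Set XX) :=
  ⟨IsClosedEmbedding.inl.isClosedMap _ h.1, IsOpenEmbedding.inl.isOpenMap _ h.2⟩

lemma isClopen_inr_image {s : Set Beta} (h : IsClopen s) : IsClopen (Sum.inr '' s : Set XX) :=
  ⟨IsClosedEmbedding.inr.isClosedMap _ h.1, IsOpenEmbedding.inr.isOpenMap _ h.2⟩

lemma isClopen_coe_singleton (n : ℕ) : IsClopen ({(n : Cpt)} : Set Cpt) := by
  have h1 : ({(n : Cpt)} : Set Cpt) = (fun x : ℕ => (x : Cpt)) '' {n} := by simp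
  constructor
  · rw [h1]
    exact OnePoint.isClosed_image_coe.mpr ⟨isClosed_discrete _, (finite_singleton n).isCompact⟩
  · rw [h1]
    exact OnePoint.isOpen_image_coe.mpr (isOpen_discrete _)

lemma isClopen_sigma_singleton (n : ℕ) : IsClopen ({σp n} : Set XX) := by
  have : ({σp n} : Set XX) = Sum.inl '' {(n : Cpt)} := by simp [σp]
  rw [this]
  exact isClopen_inl_image (isClopen_coe_singleton n)

lemma isClopen_inr_pure_singleton (p : ℕ × ℕ) : IsClopen ({Sum.inr (pure p)} : Set XX) := by
  have : ({Sum.inr (pure p)} : Set XX) = Sum.inr '' {(pure p : Beta)} := by simp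
  rw [this]
  exact isClopen_inr_image (isClopen_pure_singleton p)

/-! ### dwC computations and localic points -/

lemma mem_dwC {A : Set XX} {x : XX} : x ∈ dwC A ↔ ∃ a ∈ A, x ≤ a := Iff.rfl

lemma subset_dwC {A : Set XX} : A ⊆ dwC A := fun a ha => ⟨a, ha, le_refl a⟩

lemma dwC_sigma (n : ℕ) : dwC ({σp n} : Set XX) = {σp n} := by
  apply Subset.antisymm
  · rintro x ⟨a, ha, hle⟩
    rw [mem_singleton_iff] at ha; subst ha
    exact le_sigma hle
  · exact subset_dwC

lemma dwC_Lam : dwC ({Λp} : Set XX) = Set.range Sum.inl := by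
  apply Subset.antisymm
  · rintro x ⟨a, ha, hle⟩
    rw [mem_singleton_iff] at ha; subst ha
    cases x with
    | inl y => exact ⟨y, rfl⟩
    | inr u => exact absurd hle le_inr_inl
  · rintro x ⟨y, rfl⟩
    exact ⟨Λp, rfl, Or.inr rfl⟩

lemma RRb_mem_pure_iff {p : ℕ × ℕ} {n : ℕ} : RRb n ∈ (pure p : Beta) ↔ p.1 = n := by
  rw [Ultrafilter.mem_pure]; rfl

lemma not_lamStar_pure (p : ℕ × ℕ) : ¬ lamStar (pure p) := by
  intro h
  exact h p.1 (RRb_mem_pure_iff.mpr rfl)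

lemma dwC_inr_pure (p : ℕ × ℕ) :
    dwC ({Sum.inr (pure p)} : Set XX) = {Sum.inr (pure p), σp p.1} := by
  apply Subset.antisymm
  · rintro x ⟨a, ha, hle⟩
    rw [mem_singleton_iff] at ha; subst ha
    cases x with
    | inl y =>
      rcases le_inl_inr.mp hle with h | ⟨n, rfl, hn⟩
      · exact absurd h (not_lamStar_pure p)
      · have hpn : p.1 = n := RRb_mem_pure_iff.mp hn
        right
        rw [mem_singleton_iff, σp, hpn]
    | inr u =>
      left; rw [le_inr_inr.mp hle]
  · rintro x (rfl | rfl)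
    · exact subset_dwC rfl
    · exact ⟨_, rfl, sigma_le_inr (RRb_mem_pure_iff.mpr rfl)⟩

lemma sigma_mem_Y (n : ℕ) : σp n ∈ localicPts XX := by
  show IsClopen (dwC ({σp n} : Set XX))
  rw [dwC_sigma]; exact isClopen_sigma_singleton n

lemma Lam_mem_Y : Λp ∈ localicPts XX := by
  show IsClopen (dwC ({Λp} : Set XX))
  rw [dwC_Lam]; exact isClopen_range_inl

lemma pure_mem_Y (p : ℕ × ℕ) : Sum.inr (pure p) ∈ localicPts XX := by
  show IsClopen (dwC ({Sum.inr (pure p)} : Set XX))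
  rw [dwC_inr_pure, Set.insert_eq]
  exact (isClopen_inr_pure_singleton p).union (isClopen_sigma_singleton p.1)

lemma not_pure_not_mem_Y {z : Beta} (hz : ¬ ∃ p, z = pure p) :
    Sum.inr z ∉ localicPts XX := by
  intro hY
  have hop : IsOpen (dwC ({Sum.inr z} : Set XX)) := hY.2
  have hpre : Sum.inr ⁻¹' (dwC ({Sum.inr z} : Set XX)) = ({z} : Set Beta) := by
    apply Subset.antisymm
    · rintro u ⟨a, ha, hle⟩
      rw [mem_singleton_iff] at ha; subst ha
      rw [mem_singleton_iff]
      exact (le_inr_inr.mp hle)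
    · rintro u rfl
      exact subset_dwC rfl
  have hopen : IsOpen ({z} : Set Beta) := by
    rw [← hpre]; exact hop.preimage continuous_inr
  obtain ⟨s, hs, hsub⟩ := mem_nbhd_basic hopen (mem_singleton z)
  have hsinf : s.Infinite := by
    intro hfin
    obtain ⟨x, _, hx⟩ := Ultrafilter.eq_pure_of_finite_mem hfin hs
    exact hz ⟨x, hx⟩
  obtain ⟨a, ha, b, hb, hab⟩ := hsinf.nontrivial
  have h1 : (pure a : Beta) = z := hsub (pure_mem_Bset ha)
  have h2 : (pure b : Beta) = z := hsub (pure_mem_Bset hb)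
  exact hab (Ultrafilter.pure_injective (h1.trans h2.symm))

/-! ### clopen upsets -/

lemma upper_sigma_Lam {U : Set XX} (hU : IsUpperSet U) {n : ℕ} (h : σp n ∈ U) : Λp ∈ U :=
  hU (σp_le_Λp n) h

lemma tail_of_Lam {U : Set XX} (hO : IsOpen U) (h : Λp ∈ U) :
    ∃ K, ∀ k, K ≤ k → σp k ∈ U := by
  have h1 : IsOpen (Sum.inl ⁻¹' U : Set Cpt) := hO.preimage continuous_inl
  have hinf : ∞ ∈ (Sum.inl ⁻¹' U : Set Cpt) := h
  rw [OnePoint.isOpen_iff_of_mem' hinf] at h1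
  have hfin : (((↑) : ℕ → Cpt) ⁻¹' (Sum.inl ⁻¹' U))ᶜ.Finite := by
    have := h1.1.finite (IsDiscrete.univ.mono (subset_univ _))
    simpa using this
  obtain ⟨K, hK⟩ := hfin.bddAbove
  refine ⟨K + 1, fun k hk => ?_⟩
  by_contra hkU
  have hkc : k ∈ (((↑) : ℕ → Cpt) ⁻¹' (Sum.inl ⁻¹' U))ᶜ := hkU
  have := hK hkc
  omega

lemma inr_nbhd {U : Set XX} (hO : IsOpen U) {z : Beta} (h : Sum.inr z ∈ U) :
    ∃ s ∈ z, ∀ u : Beta, s ∈ u → Sum.inr u ∈ U := by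
  have h1 : IsOpen (Sum.inr ⁻¹' U : Set Beta) := hO.preimage continuous_inr
  obtain ⟨s, hs, hsub⟩ := mem_nbhd_basic h1 h
  exact ⟨s, hs, fun u hu => hsub hu⟩

/-! ### the families `VΛ` and `Vc` -/

def VΛ (K : ℕ) : Set XX :=
  {x | x = Λp ∨ (∃ k, K ≤ k ∧ x = σp k) ∨ ∃ z : Beta, x = Sum.inr z ∧ SSb K ∈ z}

def Vc (n K : ℕ) : Set XX :=
  insert (σp n) ({x | ∃ z : Beta, x = Sum.inr z ∧ RRb n ∈ z} ∪ VΛ K)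

lemma Lam_mem_VΛ (K : ℕ) : Λp ∈ VΛ K := Or.inl rfl

lemma sigma_mem_VΛ_iff {m K : ℕ} : σp m ∈ VΛ K ↔ K ≤ m := by
  constructor
  · rintro (h | ⟨k, hk, h⟩ | ⟨z, h, _⟩)
    · exact absurd h (σp_ne_Λp m)
    · rw [σp_inj h]; exact hk
    · exact absurd h Sum.inl_ne_inr
  · intro h; exact Or.inr (Or.inl ⟨m, h, rfl⟩)

lemma inr_mem_VΛ_iff {z : Beta} {K : ℕ} : Sum.inr z ∈ VΛ K ↔ SSb K ∈ z := by
  constructor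
  · rintro (h | ⟨k, _, h⟩ | ⟨z', h, hz'⟩)
    · exact absurd h.symm Sum.inl_ne_inr
    · exact absurd h.symm Sum.inl_ne_inr
    · obtain rfl : z = z' := Sum.inr_injective h
      exact hz'
  · intro h; exact Or.inr (Or.inr ⟨z, rfl, h⟩)

lemma sigma_mem_Vc_iff {m n K : ℕ} : σp m ∈ Vc n K ↔ m = n ∨ K ≤ m := by
  constructor
  · rintro (h | h)
    · exact Or.inl (σp_inj h)
    · rcases h with ⟨z, hz, _⟩ | h
      · exact absurd hz Sum.inl_ne_inr
      · exact Or.inr (sigma_mem_VΛ_iff.mp h)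
  · rintro (rfl | h)
    · exact Or.inl rfl
    · exact Or.inr (Or.inr (sigma_mem_VΛ_iff.mpr h))

lemma Lam_mem_Vc (n K : ℕ) : Λp ∈ Vc n K := Or.inr (Or.inr (Lam_mem_VΛ K))

lemma inr_mem_Vc_iff {z : Beta} {n K : ℕ} :
    Sum.inr z ∈ Vc n K ↔ RRb n ∈ z ∨ SSb K ∈ z := by
  constructor
  · rintro (h | h)
    · exact absurd h.symm Sum.inl_ne_inr
    · rcases h with ⟨z', hz', h⟩ | h
      · obtain rfl : z = z' := Sum.inr_injective hz'
        exact Or.inl h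
      · exact Or.inr (inr_mem_VΛ_iff.mp h)
  · rintro (h | h)
    · exact Or.inr (Or.inl ⟨z, rfl, h⟩)
    · exact Or.inr (Or.inr (inr_mem_VΛ_iff.mpr h))

def CsetΛ (K : ℕ) : Set Cpt := {c | c = ∞ ∨ ∃ k, K ≤ k ∧ c = (k : Cpt)}

lemma isClopen_CsetΛ (K : ℕ) : IsClopen (CsetΛ K) := by
  have hmem : ∞ ∈ CsetΛ K := Or.inl rfl
  have hpre : ((↑) : ℕ → Cpt) ⁻¹' CsetΛ K = {k | K ≤ k} := by
    ext k
    simp only [mem_preimage, CsetΛ, mem_setOf_eq]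
    constructor
    · rintro (h | ⟨k', hk', h⟩)
      · exact absurd h (OnePoint.coe_ne_infty k)
      · rw [OnePoint.coe_eq_coe] at h; rw [h]; exact hk'
    · intro h; exact Or.inr ⟨k, h, rfl⟩
  constructor
  · rw [OnePoint.isClosed_iff_of_mem hmem]
    exact isClosed_discrete _
  · rw [OnePoint.isOpen_iff_of_mem' hmem, hpre]
    constructor
    · have : ({k | K ≤ k} : Set ℕ)ᶜ ⊆ Set.Iio K := by
        intro k hk; simpa [Set.mem_Iio] using hk
      exact ((Set.finite_Iio K).subset this).isCompact
    · exact isOpen_discrete _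

lemma VΛ_eq_images (K : ℕ) :
    VΛ K = Sum.inl '' CsetΛ K ∪ Sum.inr '' Bset (SSb K) := by
  ext x
  constructor
  · rintro (rfl | ⟨k, hk, rfl⟩ | ⟨z, rfl, hz⟩)
    · exact Or.inl ⟨∞, Or.inl rfl, rfl⟩
    · exact Or.inl ⟨(k : Cpt), Or.inr ⟨k, hk, rfl⟩, rfl⟩
    · exact Or.inr ⟨z, hz, rfl⟩
  · rintro (⟨c, hc, rfl⟩ | ⟨z, hz, rfl⟩)
    · rcases hc with rfl | ⟨k, hk, rfl⟩
      · exact Or.inl rfl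
      · exact Or.inr (Or.inl ⟨k, hk, rfl⟩)
    · exact Or.inr (Or.inr ⟨z, rfl, hz⟩)

lemma isClopen_VΛ (K : ℕ) : IsClopen (VΛ K) := by
  rw [VΛ_eq_images]
  exact (isClopen_inl_image (isClopen_CsetΛ K)).union (isClopen_inr_image (isClopen_Bset _))

lemma isClopen_Vc (n K : ℕ) : IsClopen (Vc n K) := by
  have : Vc n K = {σp n} ∪ (Sum.inr '' Bset (RRb n) ∪ VΛ K) := by
    rw [Vc, Set.insert_eq]
    congr 1
    ext x
    simp only [mem_setOf_eq, mem_union, mem_image, Bset]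
    constructor
    · rintro (⟨z, rfl, hz⟩ | h)
      · exact Or.inl ⟨z, hz, rfl⟩
      · exact Or.inr h
    · rintro (⟨z, hz, rfl⟩ | h)
      · exact Or.inl ⟨z, rfl, hz⟩
      · exact Or.inr h
  rw [this]
  exact (isClopen_sigma_singleton n).union
    ((isClopen_inr_image (isClopen_Bset _)).union (isClopen_VΛ K))

lemma upper_VΛ (K : ℕ) : IsUpperSet (VΛ K) := by
  intro a b hab ha
  rcases ha with rfl | ⟨k, hk, rfl⟩ | ⟨z, rfl, hz⟩
  · cases b with
    | inl y =>
      rcases le_inl_inl.mp hab with rfl | rfl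
      · exact Lam_mem_VΛ K
      · exact Lam_mem_VΛ K
    | inr u =>
      rcases le_inl_inr.mp hab with h | ⟨n, hn, _⟩
      · exact inr_mem_VΛ_iff.mpr (SSb_mem_of_lamStar h K)
      · exact absurd hn.symm (OnePoint.coe_ne_infty n)
  · cases b with
    | inl y =>
      rcases le_inl_inl.mp hab with rfl | rfl
      · exact sigma_mem_VΛ_iff.mpr hk
      · exact Lam_mem_VΛ K
    | inr u =>
      rcases le_inl_inr.mp hab with h | ⟨n, hn, hRn⟩
      · exact inr_mem_VΛ_iff.mpr (SSb_mem_of_lamStar h K)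
      · have : k = n := by simpa [σp, OnePoint.coe_eq_coe] using hn
        subst this
        exact inr_mem_VΛ_iff.mpr (SSb_mem_of_RRb hRn hk)
  · rw [inr_le hab]
    exact inr_mem_VΛ_iff.mpr hz

lemma upper_Vc (n K : ℕ) : IsUpperSet (Vc n K) := by
  intro a b hab ha
  rcases ha with rfl | ⟨z, rfl, hz⟩ | ha
  · cases b with
    | inl y =>
      rcases le_inl_inl.mp hab with h | rfl
      · rw [← h]
        exact Or.inl rfl
      · exact Lam_mem_Vc n K
    | inr u =>
      rcases le_inl_inr.mp hab with h | ⟨m, hm, hRm⟩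
      · exact inr_mem_Vc_iff.mpr (Or.inr (SSb_mem_of_lamStar h K))
      · have : n = m := by simpa [σp, OnePoint.coe_eq_coe] using hm
        subst this
        exact inr_mem_Vc_iff.mpr (Or.inl hRm)
  · rw [inr_le hab]
    exact inr_mem_Vc_iff.mpr (Or.inl hz)
  · exact Or.inr (Or.inr (upper_VΛ K hab ha))

lemma min_singleton {x : XX} : minOf ({x} : Set XX) = {x} := by
  apply Subset.antisymm
  · exact fun y hy => hy.1
  · intro y hy
    rw [mem_singleton_iff] at hy; subst hy
    exact ⟨rfl, fun z hz _ => hz⟩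

lemma scott_VΛ (K : ℕ) : IsScottUp (VΛ K) := by
  refine ⟨(isClopen_VΛ K).1, upper_VΛ K, ?_⟩
  intro x hx
  rcases hx.1 with rfl | ⟨k, _, rfl⟩ | ⟨z, rfl, hz⟩
  · exact Lam_mem_Y
  · exact sigma_mem_Y k
  · by_cases hls : lamStar z
    · have := hx.2 Λp (Lam_mem_VΛ K) (Lam_le_inr hls)
      exact absurd this Sum.inl_ne_inr
    · obtain ⟨m, hm⟩ := not_lamStar_iff.mp hls
      have hKm : K ≤ m := le_of_SSb_RRb hz hm
      have := hx.2 (σp m) (sigma_mem_VΛ_iff.mpr hKm) (sigma_le_inr hm)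
      exact absurd this Sum.inl_ne_inr

lemma scott_Vc (n K : ℕ) : IsScottUp (Vc n K) := by
  refine ⟨(isClopen_Vc n K).1, upper_Vc n K, ?_⟩
  intro x hx
  rcases hx.1 with rfl | ⟨z, rfl, hz⟩ | hv
  · exact sigma_mem_Y n
  · have := hx.2 (σp n) (Or.inl rfl) (sigma_le_inr hz)
    exact absurd this (by simp [σp])
  · rcases hv with rfl | ⟨k, _, rfl⟩ | ⟨z, rfl, hz⟩
    · exact Lam_mem_Y
    · exact sigma_mem_Y k
    · by_cases hls : lamStar z
      · have := hx.2 Λp (Lam_mem_Vc n K) (Lam_le_inr hls)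
        exact absurd this Sum.inl_ne_inr
      · obtain ⟨m, hm⟩ := not_lamStar_iff.mp hls
        have hKm : K ≤ m := le_of_SSb_RRb hz hm
        have := hx.2 (σp m) (Or.inr (Or.inr (sigma_mem_VΛ_iff.mpr hKm))) (sigma_le_inr hm)
        exact absurd this Sum.inl_ne_inr

lemma VΛ_mem_ClopSUp (K : ℕ) : VΛ K ∈ ClopSUp XX := ⟨isClopen_VΛ K, scott_VΛ K⟩

lemma Vc_mem_ClopSUp (n K : ℕ) : Vc n K ∈ ClopSUp XX := ⟨isClopen_Vc n K, scott_Vc n K⟩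

lemma pure_singleton_mem_ClopSUp (p : ℕ × ℕ) :
    ({Sum.inr (pure p)} : Set XX) ∈ ClopSUp XX := by
  refine ⟨isClopen_inr_pure_singleton p, (isClopen_inr_pure_singleton p).1, ?_, ?_⟩
  · intro a b hab ha
    rw [mem_singleton_iff] at ha; subst ha
    rw [inr_le hab]; rfl
  · rw [min_singleton]
    rintro x rfl
    exact pure_mem_Y p

/-! ### coverage and star-star -/

lemma mem_ClopSUp_iff {V : Set XX} :
    V ∈ ClopSUp XX ↔ IsClopen V ∧ IsClosed V ∧ IsUpperSet V ∧ minOf V ⊆ localicPts XX :=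
  Iff.rfl

lemma coverage {V : Set XX} (hV : V ∈ ClopSUp XX) {z : Beta} (hzV : Sum.inr z ∈ V)
    (hz : ¬ ∃ p, z = pure p) :
    (∃ m, RRb m ∈ z ∧ σp m ∈ V) ∨ (lamStar z ∧ Λp ∈ V) := by
  obtain ⟨hcl, _, hupper, hmin⟩ := mem_ClopSUp_iff.mp hV
  have hnotY := not_pure_not_mem_Y hz
  have hnm : Sum.inr z ∉ minOf V := fun h => hnotY (hmin h)
  have hex : ∃ w ∈ V, w ≤ Sum.inr z ∧ w ≠ Sum.inr z := by
    by_contra h'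
    push_neg at h'
    exact hnm ⟨hzV, h'⟩
  obtain ⟨w, hwV, hwle, hwne⟩ := hex
  cases w with
  | inr u => exact absurd (congrArg Sum.inr (le_inr_inr.mp hwle)) hwne
  | inl y =>
    rcases le_inl_inr.mp hwle with hls | ⟨n, rfl, hRn⟩
    · refine Or.inr ⟨hls, ?_⟩
      cases y with
      | none => exact hwV
      | some n => exact upper_sigma_Lam hupper (n := n) hwV
    · exact Or.inl ⟨n, hRn, hwV⟩

lemma mem_starstar {V : Set XX} {t : XX} :
    t ∈ starC (starC V) ↔ ∀ s, t ≤ s → s ∈ dwC V := by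
  constructor
  · intro h s hts
    by_contra hs
    exact h ⟨s, hs, hts⟩
  · rintro h ⟨a, ha, hta⟩
    exact ha (h a hta)

lemma inr_mem_dwC_iff {A : Set XX} {z : Beta} : Sum.inr z ∈ dwC A ↔ Sum.inr z ∈ A := by
  constructor
  · rintro ⟨a, ha, hle⟩
    rwa [inr_le hle] at ha
  · intro h; exact subset_dwC h

lemma starstar_subset {V : Set XX} (hV : V ∈ ClopSUp XX) : starC (starC V) ⊆ V := by
  intro t ht
  rw [mem_starstar] at ht
  obtain ⟨hcl, _, hupper, hmin⟩ := mem_ClopSUp_iff.mp hV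
  cases t with
  | inr z => exact inr_mem_dwC_iff.mp (ht _ (le_refl _))
  | inl y =>
    cases y with
    | some n =>
      obtain ⟨z₀, hz₀R, hz₀f⟩ := exists_free_RRb n
      have h1 : (Sum.inr z₀ : XX) ∈ V := inr_mem_dwC_iff.mp (ht _ (sigma_le_inr hz₀R))
      rcases coverage hV h1 hz₀f.not_pure with ⟨m, hm, hσ⟩ | ⟨hls, _⟩
      · rwa [show m = n from RRb_unique hm hz₀R] at hσ
      · exact absurd hz₀R (hls n)
    | none =>
      obtain ⟨z₁, hz₁l, hz₁f⟩ := exists_free_lamStar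
      have h1 : (Sum.inr z₁ : XX) ∈ V := inr_mem_dwC_iff.mp (ht _ (Lam_le_inr hz₁l))
      rcases coverage hV h1 hz₁f.not_pure with ⟨m, hm, _⟩ | ⟨_, hΛ⟩
      · exact absurd hm (hz₁l m)
      · exact hΛ

/-! ### membership in star-star for the families -/

lemma sigma_mem_starstar {n K : ℕ} : σp n ∈ starC (starC (Vc n K)) := by
  rw [mem_starstar]
  intro s hs
  apply subset_dwC
  cases s with
  | inl y =>
    rcases le_inl_inl.mp hs with h | rfl
    · rw [← h]
      exact Or.inl rfl
    · exact Lam_mem_Vc n K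
  | inr z =>
    rcases le_inl_inr.mp hs with h | ⟨m, hm, hRm⟩
    · exact inr_mem_Vc_iff.mpr (Or.inr (SSb_mem_of_lamStar h K))
    · have : n = m := by simpa [OnePoint.coe_eq_coe] using hm
      subst this
      exact inr_mem_Vc_iff.mpr (Or.inl hRm)

lemma Lam_mem_starstar {K : ℕ} : Λp ∈ starC (starC (VΛ K)) := by
  rw [mem_starstar]
  intro s hs
  apply subset_dwC
  cases s with
  | inl y =>
    rcases le_inl_inl.mp hs with h | rfl
    · rw [← h]
      exact Lam_mem_VΛ K
    · exact Lam_mem_VΛ K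
  | inr z =>
    rcases le_inl_inr.mp hs with h | ⟨m, hm, _⟩
    · exact inr_mem_VΛ_iff.mpr (SSb_mem_of_lamStar h K)
    · exact absurd hm.symm (OnePoint.coe_ne_infty m)

lemma pure_mem_starstar {p : ℕ × ℕ} :
    Sum.inr (pure p) ∈ starC (starC ({Sum.inr (pure p)} : Set XX)) := by
  rw [mem_starstar]
  intro s hs
  apply subset_dwC
  rw [inr_le hs]; rfl

/-! ### subset lemmas for the families -/

lemma VΛ_subset {U : Set XX} (hcl : IsClopen U) (hup : IsUpperSet U) (hΛ : Λp ∈ U) :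
    ∃ K, VΛ K ⊆ U := by
  obtain ⟨K, hK⟩ := tail_of_Lam hcl.2 hΛ
  refine ⟨K, ?_⟩
  rintro x (rfl | ⟨k, hk, rfl⟩ | ⟨z, rfl, hz⟩)
  · exact hΛ
  · exact hK k hk
  · by_cases hls : lamStar z
    · exact hup (Lam_le_inr hls) hΛ
    · obtain ⟨m, hm⟩ := not_lamStar_iff.mp hls
      exact hup (sigma_le_inr hm) (hK m (le_of_SSb_RRb hz hm))

lemma Vc_subset {U : Set XX} (hcl : IsClopen U) (hup : IsUpperSet U) {n : ℕ}
    (hn : σp n ∈ U) : ∃ K, Vc n K ⊆ U := by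
  obtain ⟨K, hK⟩ := VΛ_subset hcl hup (upper_sigma_Lam hup hn)
  refine ⟨K, ?_⟩
  rintro x (rfl | ⟨z, rfl, hz⟩ | hv)
  · exact hn
  · exact hup (sigma_le_inr hz) hn
  · exact hK hv

/-! ### the `dOp` computation -/

def Wfam (U : Set XX) : Set (Set XX) :=
  {W : Set XX | ∃ V ∈ ClopSUp XX, V ⊆ U ∧ W = starC (starC V)}

lemma dOp_eq_closure (U : Set XX) : dOp U = closure (⋃₀ Wfam U) := rfl

lemma pure_mem_sUnion {U : Set XX} {p : ℕ × ℕ} (h : Sum.inr (pure p) ∈ U) :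
    Sum.inr (pure p) ∈ ⋃₀ Wfam U :=
  ⟨_, ⟨{Sum.inr (pure p)}, pure_singleton_mem_ClopSUp p,
    singleton_subset_iff.mpr h, rfl⟩, pure_mem_starstar⟩

lemma sUnion_Wfam_subset {U : Set XX} : ⋃₀ Wfam U ⊆ U := by
  rintro x ⟨W, ⟨V, hVC, hVU, rfl⟩, hxW⟩
  exact hVU (starstar_subset hVC hxW)

lemma dOp_eq {U : Set XX} (hU : IsClopen U) (hup : IsUpperSet U) : dOp U = U := by
  rw [dOp_eq_closure]
  apply Subset.antisymm
  · exact closure_minimal sUnion_Wfam_subset hU.1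
  · intro t ht
    cases t with
    | inl y =>
      cases y with
      | some n =>
        apply subset_closure
        obtain ⟨K, hsub⟩ := Vc_subset hU hup (n := n) ht
        exact ⟨_, ⟨Vc n K, Vc_mem_ClopSUp n K, hsub, rfl⟩, sigma_mem_starstar⟩
      | none =>
        apply subset_closure
        obtain ⟨K, hsub⟩ := VΛ_subset hU hup ht
        exact ⟨_, ⟨VΛ K, VΛ_mem_ClopSUp K, hsub, rfl⟩, Lam_mem_starstar⟩
    | inr z =>
      by_cases hz : ∃ p, z = pure p
      · obtain ⟨p, rfl⟩ := hz
        exact subset_closure (pure_mem_sUnion ht)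
      · obtain ⟨s, hs, hsub⟩ := inr_nbhd hU.2 ht
        rw [mem_closure_iff]
        intro O hO hzO
        obtain ⟨s', hs', hsub'⟩ := inr_nbhd hO hzO
        obtain ⟨a, ha⟩ := Ultrafilter.nonempty_of_mem (Filter.inter_mem hs hs')
        refine ⟨Sum.inr (pure a), ?_, ?_⟩
        · exact hsub' (pure a) (Ultrafilter.mem_pure.mpr ha.2)
        · exact pure_mem_sUnion (hsub (pure a) (Ultrafilter.mem_pure.mpr ha.1))

lemma compl_dwC_compl {U : Set XX} (hup : IsUpperSet U) : (dwC Uᶜ)ᶜ = U := by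
  ext x
  constructor
  · intro h
    by_contra hx
    exact h ⟨x, hx, le_refl x⟩
  · intro hx h
    obtain ⟨a, ha, hle⟩ := h
    exact ha (hup hle hx)

/-! ### arithmetic -/

lemma arith {U V : Set XX} (hU : U ∈ ClopSUp XX) (hV : V ∈ ClopSUp XX) :
    IsScottUp (U ∩ V) := by
  obtain ⟨hUc, hUcl, hUu, _⟩ := mem_ClopSUp_iff.mp hU
  obtain ⟨hVc, hVcl, hVu, _⟩ := mem_ClopSUp_iff.mp hV
  refine ⟨hUcl.inter hVcl, hUu.inter hVu, ?_⟩
  intro x hx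
  by_contra hxY
  have hz : ∃ z : Beta, x = Sum.inr z ∧ ¬ ∃ p, z = pure p := by
    cases x with
    | inl y =>
      cases y with
      | some n => exact absurd (sigma_mem_Y n) hxY
      | none => exact absurd Lam_mem_Y hxY
    | inr z =>
      refine ⟨z, rfl, ?_⟩
      rintro ⟨p, rfl⟩
      exact hxY (pure_mem_Y p)
  obtain ⟨z, rfl, hznp⟩ := hz
  rcases coverage hU hx.1.1 hznp with ⟨m, hm, hσU⟩ | ⟨hls, hΛU⟩
  · rcases coverage hV hx.1.2 hznp with ⟨m', hm', hσV⟩ | ⟨hls, _⟩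
    · rw [show m' = m from RRb_unique hm' hm] at hσV
      have := hx.2 (σp m) ⟨hσU, hσV⟩ (sigma_le_inr hm)
      exact absurd this (by simp [σp])
    · exact absurd hm (hls m)
  · rcases coverage hV hx.1.2 hznp with ⟨m, hm, _⟩ | ⟨_, hΛV⟩
    · exact absurd hm (hls m)
    · have := hx.2 Λp ⟨hΛU, hΛV⟩ (Lam_le_inr hls)
      exact absurd this (by simp [Λp])

/-! ### the L-space property -/

lemma lspace {U : Set XX} (hO : IsOpen U) (hup : IsUpperSet U) :
    IsOpen (closure U) ∧ IsUpperSet (closure U) := by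
  have hUCclosed : IsClosed (U ∩ Set.range (Sum.inl : Cpt → XX)) := by
    by_cases hΛ : Λp ∈ U
    · have heq : U ∩ Set.range (Sum.inl : Cpt → XX) = Sum.inl '' (Sum.inl ⁻¹' U) := by
        rw [Set.image_preimage_eq_inter_range, Set.inter_comm]
      rw [heq]
      apply IsClosedEmbedding.inl.isClosedMap
      rw [OnePoint.isClosed_iff_of_mem (by exact hΛ : ∞ ∈ (Sum.inl ⁻¹' U : Set Cpt))]
      exact isClosed_discrete _
    · have heq : U ∩ Set.range (Sum.inl : Cpt → XX) = ∅ := by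
        ext x
        simp only [mem_inter_iff, Set.mem_range, mem_empty_iff_false, iff_false, not_and,
          not_exists]
        intro hxU y hy
        subst hy
        cases y with
        | some n => exact hΛ (upper_sigma_Lam hup (n := n) hxU)
        | none => exact hΛ hxU
      rw [heq]; exact isClosed_empty
  have hdecomp : U = (U ∩ Set.range (Sum.inl : Cpt → XX)) ∪
      Sum.inr '' (Sum.inr ⁻¹' U) := by
    rw [Set.image_preimage_eq_inter_range]
    rw [← Set.inter_union_distrib_left]
    rw [Set.range_inl_union_range_inr, Set.inter_univ]
  have hclos : closure U = (U ∩ Set.range (Sum.inl : Cpt → XX)) ∪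
      Sum.inr '' closure (Sum.inr ⁻¹' U) := by
    conv_lhs => rw [hdecomp]
    rw [closure_union, hUCclosed.closure_eq, IsClosedEmbedding.inr.closure_image_eq]
  constructor
  · rw [hclos]
    apply IsOpen.union
    · exact hO.inter isOpen_range_inl
    · exact IsOpenEmbedding.inr.isOpenMap _ (isClopen_closure_open (hO.preimage continuous_inr)).2
  · rw [hclos]
    intro a b hab ha
    rcases ha with ⟨haU, _⟩ | ⟨z, hz, rfl⟩
    · have hb : b ∈ U := hup hab haU
      cases b with
      | inl y => exact Or.inl ⟨hb, y, rfl⟩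
      | inr u => exact Or.inr ⟨u, subset_closure hb, rfl⟩
    · rw [inr_le hab]
      exact Or.inr ⟨z, hz, rfl⟩

/-! ### Priestley separation -/

lemma upper_inr_image (s : Set Beta) : IsUpperSet (Sum.inr '' s : Set XX) := by
  rintro a b hab ⟨z, hz, rfl⟩
  rw [inr_le hab]
  exact ⟨z, hz, rfl⟩

lemma priestley_sep : ∀ x y : XX, ¬ x ≤ y →
    ∃ U : Set XX, IsClopen U ∧ IsUpperSet U ∧ x ∈ U ∧ y ∉ U := by
  intro x y hxy
  cases x with
  | inr u =>
    cases y with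
    | inl w =>
      refine ⟨Sum.inr '' Set.univ, isClopen_inr_image isClopen_univ,
        upper_inr_image _, ⟨u, trivial, rfl⟩, ?_⟩
      rintro ⟨z, _, h⟩
      exact Sum.inr_ne_inl h
    | inr v =>
      have huv : u ≠ v := fun h => hxy (le_inr_inr.mpr h)
      have hex : ∃ s, s ∈ u ∧ s ∉ v := by
        by_contra h'
        push_neg at h'
        have hle : (v : Filter (ℕ × ℕ)) ≤ (u : Filter (ℕ × ℕ)) := fun s hs => h' s hs
        exact huv (Ultrafilter.coe_le_coe.mp hle).symm
      obtain ⟨s, hsu, hsv⟩ := hex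
      refine ⟨Sum.inr '' Bset s, isClopen_inr_image (isClopen_Bset s),
        upper_inr_image _, ⟨u, hsu, rfl⟩, ?_⟩
      rintro ⟨z, hz, hzz⟩
      rw [Sum.inr.injEq] at hzz
      subst hzz
      exact hsv hz
  | inl c =>
    cases c with
    | some n =>
      cases y with
      | inl w =>
        cases w with
        | none => exact absurd (Or.inr rfl) hxy
        | some m =>
          have hmn : m ≠ n := by
            rintro rfl
            exact hxy (le_refl _)
          refine ⟨Vc n (m + 1), isClopen_Vc n (m + 1), upper_Vc n (m + 1), Or.inl rfl, ?_⟩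
          intro hmem
          rcases sigma_mem_Vc_iff.mp hmem with h | h
          · exact hmn h
          · omega
      | inr z =>
        have h1 : ¬ lamStar z ∧ RRb n ∉ z := by
          constructor
          · intro h; exact hxy (Or.inl h)
          · intro h; exact hxy (Or.inr ⟨n, rfl, h⟩)
        obtain ⟨m₀, hm₀⟩ := not_lamStar_iff.mp h1.1
        refine ⟨Vc n (m₀ + 1), isClopen_Vc n (m₀ + 1), upper_Vc n (m₀ + 1), Or.inl rfl, ?_⟩
        intro hmem
        rcases inr_mem_Vc_iff.mp hmem with h | h
        · exact h1.2 h
        · have := le_of_SSb_RRb h hm₀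
          omega
    | none =>
      cases y with
      | inl w =>
        cases w with
        | none => exact absurd (Or.inl rfl) hxy
        | some m =>
          refine ⟨VΛ (m + 1), isClopen_VΛ (m + 1), upper_VΛ (m + 1), Lam_mem_VΛ _, ?_⟩
          intro hmem
          have := sigma_mem_VΛ_iff.mp hmem
          omega
      | inr z =>
        have h1 : ¬ lamStar z := fun h => hxy (Or.inl h)
        obtain ⟨m₀, hm₀⟩ := not_lamStar_iff.mp h1
        refine ⟨VΛ (m₀ + 1), isClopen_VΛ (m₀ + 1), upper_VΛ (m₀ + 1), Lam_mem_VΛ _, ?_⟩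
        intro hmem
        have := le_of_SSb_RRb (inr_mem_VΛ_iff.mp hmem) hm₀
        omega

/-! ### nuclearity of `univ` -/

lemma dwC_subset_inl_union {W : Set XX} :
    dwC W ⊆ Set.range (Sum.inl : Cpt → XX) ∪ (W ∩ Set.range (Sum.inr : Beta → XX)) := by
  rintro x ⟨a, ha, hle⟩
  cases x with
  | inl y => exact Or.inl ⟨y, rfl⟩
  | inr u =>
    have := inr_le hle
    subst this
    exact Or.inr ⟨ha, u, rfl⟩

lemma dwC_clopen {W : Set XX} (hW : IsClopen W) : IsClopen (dwC W) := by
  classical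
  set P : Set Beta := Sum.inr ⁻¹' W with hPdef
  have hPclopen : IsClopen P := hW.preimage continuous_inr
  set S₀ : Set (ℕ × ℕ) := {a | (pure a : Beta) ∈ P} with hS₀def
  have hPB : P = Bset S₀ := clopen_eq_Bset hPclopen
  by_cases hbig : (∃ z ∈ P, lamStar z) ∨ Λp ∈ W
  · have heq : dwC W = Set.range (Sum.inl : Cpt → XX) ∪
        (W ∩ Set.range (Sum.inr : Beta → XX)) := by
      apply Subset.antisymm dwC_subset_inl_union
      rintro x (⟨y, rfl⟩ | ⟨hxW, _⟩)
      · rcases hbig with ⟨z, hzP, hls⟩ | hΛ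
        · refine ⟨Sum.inr z, hzP, ?_⟩
          cases y with
          | none => exact Or.inl hls
          | some n => exact Or.inl hls
        · refine ⟨Λp, hΛ, ?_⟩
          cases y with
          | none => exact Or.inl rfl
          | some n => exact Or.inr rfl
      · exact subset_dwC hxW
    rw [heq]
    exact isClopen_range_inl.union (hW.inter isClopen_range_inr)
  · push_neg at hbig
    obtain ⟨hnls, hΛ⟩ := hbig
    set I : Set ℕ := {m | (RRb m ∩ S₀).Nonempty} with hIdef
    have hIfin : I.Finite := by
      by_contra hIinf
      haveI := (show I.Infinite from hIinf).to_subtype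
      set g : I → ℕ × ℕ := fun j => j.2.some with hgdef
      have hg1 : ∀ j : I, g j ∈ RRb j.1 ∩ S₀ := fun j => j.2.some_mem
      have hginj : Function.Injective g := by
        intro j₁ j₂ h
        have e1 : (g j₁).1 = j₁.1 := (hg1 j₁).1
        have e2 : (g j₂).1 = j₂.1 := (hg1 j₂).1
        apply Subtype.ext
        rw [← e1, ← e2, h]
      have hTinf : (Set.range g).Infinite := Set.infinite_range_of_injective hginj
      obtain ⟨z, hTz, hfree⟩ := exists_free_mem hTinf
      have hzP : z ∈ P := by
        rw [hPB]
        exact Filter.mem_of_superset hTz (by rintro p ⟨j, rfl⟩; exact (hg1 j).2)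
      apply hnls z hzP
      intro m hm
      have h2 : RRb m ∩ Set.range g ∈ z := Filter.inter_mem hm hTz
      have hsub : (RRb m ∩ Set.range g).Subsingleton := by
        rintro p ⟨hp1, j, rfl⟩ q ⟨hq1, j', rfl⟩
        have : j = j' := by
          apply Subtype.ext
          have e1 : (j : ℕ) = m := by rw [← (hg1 j).1]; exact hp1
          have e2 : (j' : ℕ) = m := by rw [← (hg1 j').1]; exact hq1
          rw [e1, e2]
        rw [this]
      exact hfree _ hsub.finite h2
    have heq : dwC W = (W ∩ Set.range (Sum.inl : Cpt → XX)) ∪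
        (W ∩ Set.range (Sum.inr : Beta → XX)) ∪ (⋃ m ∈ I, {σp m}) := by
      apply Subset.antisymm
      · rintro x ⟨a, ha, hle⟩
        cases a with
        | inl y =>
          have hxa : x = Sum.inl y := by
            cases x with
            | inl y' =>
              rcases le_inl_inl.mp hle with rfl | rfl
              · rfl
              · exact absurd ha hΛ
            | inr u => exact absurd hle le_inr_inl
          subst hxa
          exact Or.inl (Or.inl ⟨ha, y, rfl⟩)
        | inr u =>
          cases x with
          | inr v =>
            have : v = u := le_inr_inr.mp hle
            subst this
            exact Or.inl (Or.inr ⟨ha, v, rfl⟩)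
          | inl y =>
            rcases le_inl_inr.mp hle with hls | ⟨n, rfl, hRn⟩
            · exact absurd hls (hnls u ha)
            · right
              refine Set.mem_biUnion ?_ rfl
              have hS₀u : S₀ ∈ u := by
                have hmem : u ∈ P := ha
                rw [hPB] at hmem
                exact hmem
              obtain ⟨p, hp⟩ := Ultrafilter.nonempty_of_mem (Filter.inter_mem hRn hS₀u)
              exact ⟨p, hp⟩
      · rintro x ((⟨hxW, _⟩ | ⟨hxW, _⟩) | hx)
        · exact subset_dwC hxW
        · exact subset_dwC hxW
        · simp only [Set.mem_iUnion, mem_singleton_iff, exists_prop] at hx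
          obtain ⟨m, hmI, rfl⟩ := hx
          obtain ⟨a, ha⟩ := hmI
          refine ⟨Sum.inr (pure a), ?_, sigma_le_inr (Ultrafilter.mem_pure.mpr ha.1)⟩
          exact ha.2
      
    rw [heq]
    refine ((hW.inter isClopen_range_inl).union (hW.inter isClopen_range_inr)).union ?_
    exact hIfin.isClopen_biUnion (fun m _ => isClopen_sigma_singleton m)

/-! ### the minimal points -/

lemma sigma_mem_min (n : ℕ) :
    σp n ∈ minOf ((Set.univ : Set XX) ∩ localicPts XX) :=
  ⟨⟨trivial, sigma_mem_Y n⟩, fun w _ hle => le_sigma hle⟩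

lemma min_cases {x : XX} (hx : x ∈ minOf ((Set.univ : Set XX) ∩ localicPts XX)) :
    ∃ n, x = σp n := by
  cases x with
  | inl y =>
    cases y with
    | some n => exact ⟨n, rfl⟩
    | none =>
      have := hx.2 (σp 0) ⟨trivial, sigma_mem_Y 0⟩ (σp_le_Λp 0)
      exact absurd this (σp_ne_Λp 0)
  | inr z =>
    exfalso
    by_cases hz : ∃ p, z = pure p
    · obtain ⟨p, rfl⟩ := hz
      have := hx.2 (σp p.1) ⟨trivial, sigma_mem_Y p.1⟩
        (sigma_le_inr (RRb_mem_pure_iff.mpr rfl))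
      exact Sum.inl_ne_inr this
    · by_cases hls : lamStar z
      · have := hx.2 Λp ⟨trivial, Lam_mem_Y⟩ (Lam_le_inr hls)
        exact Sum.inl_ne_inr this
      · obtain ⟨m, hm⟩ := not_lamStar_iff.mp hls
        have := hx.2 (σp m) ⟨trivial, sigma_mem_Y m⟩ (sigma_le_inr hm)
        exact Sum.inl_ne_inr this

/-! ### the trace topology -/

abbrev Smin : Set XX := minOf ((Set.univ : Set XX) ∩ localicPts XX)

def sk (k : ℕ) : ↥Smin := ⟨σp k, sigma_mem_min k⟩

lemma trace_tail' {O : Set ↥Smin}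
    (hO : TopologicalSpace.GenerateOpen
      {V : Set ↥Smin | ∃ U : Set XX, IsClopen U ∧ IsUpperSet U ∧ V = Subtype.val ⁻¹' U} O) :
    ∀ x ∈ O, ∃ K, ∀ k, K ≤ k → sk k ∈ O := by
  induction hO with
  | basic V hV =>
    intro x hx
    obtain ⟨W, hWc, hWu, rfl⟩ := hV
    obtain ⟨n, hn⟩ := min_cases x.2
    have hσ : σp n ∈ W := by rw [← hn]; exact hx
    obtain ⟨K, hK⟩ := tail_of_Lam hWc.2 (upper_sigma_Lam hWu hσ)
    exact ⟨K, fun k hk => hK k hk⟩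
  | univ => intro x _; exact ⟨0, fun k _ => trivial⟩
  | inter s t _ _ ihs iht =>
    rintro x ⟨hxs, hxt⟩
    obtain ⟨K1, h1⟩ := ihs x hxs
    obtain ⟨K2, h2⟩ := iht x hxt
    exact ⟨max K1 K2, fun k hk => ⟨h1 k (le_trans (le_max_left _ _) hk),
      h2 k (le_trans (le_max_right _ _) hk)⟩⟩
  | sUnion S _ ih =>
    rintro x ⟨t, htS, hxt⟩
    obtain ⟨K, hK⟩ := ih t htS x hxt
    exact ⟨K, fun k hk => ⟨t, htS, hK k hk⟩⟩

lemma trace_tail {O : Set ↥Smin} (hO : (traceTop Smin).IsOpen O) :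
    ∀ x ∈ O, ∃ K, ∀ k, K ≤ k → sk k ∈ O := trace_tail' hO

end St19


/-- There exists an arithmetic L-space `X` such that `min Y_d`
(where `Y_d = N_d ∩ Y` for the nuclear subset `N_d` whose nucleus `j_N` is the
`d`-nucleus), topologized so that its open sets are exactly the traces of clopen upsets
of `X`, is not Hausdorff. -/
theorem statement19 :
    ∃ (X : Type) (t : TopologicalSpace X) (p : PartialOrder X) (N : Set X),
      letI := t
      letI := p
      IsArithmeticLSpace X ∧ IsNuclearSub N ∧
        (∀ U : Set X, IsClopen U → IsUpperSet U → jN N U = dOp U) ∧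
        ¬@T2Space _ (traceTop (minOf (N ∩ localicPts X))) := by
  classical
  refine ⟨St19.XX, inferInstance, St19.instPOXX, Set.univ, ?_, ?_, ?_, ?_⟩
  · refine ⟨⟨⟨⟨inferInstance, St19.priestley_sep⟩, fun U hO hup => St19.lspace hO hup⟩, ?_⟩,
      fun U V hU hV => St19.arith hU hV⟩
    intro U hU hup
    have h2 : ⋃₀ St19.Wfam U ⊆ coreC U := by
      rintro x ⟨W, ⟨V, hVC, hVU, rfl⟩, hxW⟩
      exact ⟨V, ⟨hVC, hVU⟩, St19.starstar_subset hVC hxW⟩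
    have h3 : U ⊆ closure (⋃₀ St19.Wfam U) := by
      have h := St19.dOp_eq hU hup
      rw [St19.dOp_eq_closure] at h
      rw [h]
    exact h3.trans (closure_mono h2)
  · exact ⟨isClosed_univ, fun U hU => by rw [Set.inter_univ]; exact St19.dwC_clopen hU⟩
  · intro U hU hup
    show (dwC ((Set.univ : Set St19.XX) \ U))ᶜ = dOp U
    rw [Set.diff_eq, Set.univ_inter, St19.compl_dwC_compl hup, St19.dOp_eq hU hup]
  · intro hT2
    have hne : St19.sk 0 ≠ St19.sk 1 := by
      intro h'
      have h2 := congrArg Subtype.val h'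
      exact absurd (St19.σp_inj h2) (by norm_num)
    obtain ⟨O0, O1, h0, h1, m0, m1, hd⟩ := hT2.t2 hne
    obtain ⟨K0, hK0⟩ := St19.trace_tail h0 _ m0
    obtain ⟨K1, hK1⟩ := St19.trace_tail h1 _ m1
    exact Set.disjoint_left.mp hd (hK0 (max K0 K1) (le_max_left _ _))
      (hK1 (max K0 K1) (le_max_right _ _))
end
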